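/- arXiv:1009.5422 — 4 statements merged into one kernel-verified Lean document; each statement's English description precedes it below -/
import Mathlib

section
/- Regarded as a function of the magnetic number B on the interval (0, |B|_c), the horizontal critical frequency satisfies the limits: |ξ|_{hc}^B → +∞ as B → 0⁺, and |ξ|_{hc}^B → 0 as B → |B|_c⁻. -/
open MeasureTheory Set Filter Topology

noncomputable section

/-- The set of Rayleigh quotients defining the critical magnetic number `|B|_c`. -/
def BcSet (g ρp ρm : ℝ) : Set ℝ :=
  {r | ∃ φ : ℝ → ℝ, (∃ K, LipschitzWith K φ) ∧ φ (-1) = 0 ∧ φ 1 = 0 ∧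
    ¬ (∀ᵐ y ∂(volume.restrict (Icc (-1:ℝ) 1)), φ y = 0) ∧
    r = g * (ρp - ρm) * (φ 0) ^ 2 / ∫ y in (-1:ℝ)..1, (deriv φ y) ^ 2}

/-- The set of quotients defining the vertical critical frequency `|ξ|_{vc}^B`. -/
def XivcSet (g ρp ρm B : ℝ) : Set ℝ :=
  {r | ∃ φ : ℝ → ℝ, ContDiff ℝ 2 φ ∧ φ (-1) = 0 ∧ φ 1 = 0 ∧
    deriv φ (-1) = 0 ∧ deriv φ 1 = 0 ∧
    0 < g * (ρp - ρm) * (φ 0) ^ 2 - B ^ 2 * ∫ y in (-1:ℝ)..1, (deriv φ y) ^ 2 ∧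
    r = (B ^ 2 * ∫ y in (-1:ℝ)..1, (deriv (deriv φ) y) ^ 2) /
        (g * (ρp - ρm) * (φ 0) ^ 2 - B ^ 2 * ∫ y in (-1:ℝ)..1, (deriv φ y) ^ 2)}

/-- The set of quotients defining the horizontal critical frequency `|ξ|_{hc}^B`. -/
def XihcSet (g ρp ρm B : ℝ) : Set ℝ :=
  {r | ∃ φ : ℝ → ℝ, (∃ K, LipschitzWith K φ) ∧ φ (-1) = 0 ∧ φ 1 = 0 ∧
    ¬ (∀ᵐ y ∂(volume.restrict (Icc (-1:ℝ) 1)), φ y = 0) ∧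
    r = (g * (ρp - ρm) * (φ 0) ^ 2 - B ^ 2 * ∫ y in (-1:ℝ)..1, (deriv φ y) ^ 2) /
        (B ^ 2 * ∫ y in (-1:ℝ)..1, (φ y) ^ 2)}

lemma lip_abs_deriv_le {K : NNReal} {φ : ℝ → ℝ} (h : LipschitzWith K φ) (y : ℝ) :
    |deriv φ y| ≤ K := by
  have h1 : ‖fderiv ℝ φ y‖ ≤ K := norm_fderiv_le_of_lipschitz ℝ h
  have h2 : deriv φ y = fderiv ℝ φ y 1 := rfl
  calc |deriv φ y| = ‖fderiv ℝ φ y 1‖ := by rw [h2]; rfl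
    _ ≤ ‖fderiv ℝ φ y‖ * ‖(1:ℝ)‖ := (fderiv ℝ φ y).le_opNorm 1
    _ ≤ K := by simpa using h1

lemma intervalIntegrable_of_bound {u : ℝ → ℝ} (hu : Measurable u) (C : ℝ)
    (hC : ∀ x, |u x| ≤ C) (a b : ℝ) : IntervalIntegrable u volume a b := by
  refine IntervalIntegrable.mono_fun' (g := fun _ => C) intervalIntegrable_const
    (hu.aestronglyMeasurable) ?_
  exact Filter.Eventually.of_forall fun x => hC x

lemma mono_integral_deriv_le {f : ℝ → ℝ} (hm : Monotone f) (hc : Continuous f)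
    {a b : ℝ} (hab : a ≤ b) :
    ∫ y in a..b, deriv f y ≤ f b - f a := by
  set μ := hm.stieltjesFunction.measure with hμ
  have h1 : ∫ y in a..b, deriv f y = ∫ y in a..b, (μ.rnDeriv volume y).toReal := by
    refine intervalIntegral.integral_congr_ae ?_
    filter_upwards [hm.ae_hasDerivAt] with x hx _
    exact hx.deriv
  have hst : ∀ x, hm.stieltjesFunction x = f x := by
    intro x
    rw [hm.stieltjesFunction_eq]
    exact rightLim_eq_of_tendsto ((hc.tendsto x).mono_left nhdsWithin_le_nhds)
  have hne : μ (Set.Ioc a b) ≠ ⊤ := by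
    rw [hμ, StieltjesFunction.measure_Ioc]; exact ENNReal.ofReal_ne_top
  rw [h1, intervalIntegral.integral_of_le hab]
  calc ∫ y in Set.Ioc a b, (μ.rnDeriv volume y).toReal ≤ (μ (Set.Ioc a b)).toReal :=
        Measure.setIntegral_toReal_rnDeriv_le hne
    _ = f b - f a := by
        rw [hμ, StieltjesFunction.measure_Ioc, hst, hst,
          ENNReal.toReal_ofReal (by linarith [hm hab])]


lemma lip_integral_deriv_eq {K : NNReal} {φ : ℝ → ℝ} (h : LipschitzWith K φ)
    {a b : ℝ} (hab : a ≤ b) :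
    ∫ y in a..b, deriv φ y = φ b - φ a := by
  set c : ℝ := (K : ℝ) with hc
  have hc0 : 0 ≤ c := K.2
  have hlip : ∀ x y : ℝ, |φ x - φ y| ≤ c * |x - y| := by
    intro x y
    have := h.dist_le_mul x y
    rwa [Real.dist_eq, Real.dist_eq] at this
  have hmf : Monotone fun y => φ y + c * y := by
    intro x y hxy
    have h1 := (abs_le.1 (hlip x y)).2
    have h2 : |x - y| = y - x := by rw [abs_sub_comm, abs_of_nonneg (by linarith)]
    simp only []
    nlinarith [h1, h2]
  have hmg : Monotone fun y => c * y - φ y := by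
    intro x y hxy
    have h1 := (abs_le.1 (hlip y x)).2
    have h2 : |y - x| = y - x := abs_of_nonneg (by linarith)
    simp only []
    nlinarith [h1, h2]
  have hcf : Continuous fun y : ℝ => φ y + c * y := h.continuous.add (by continuity)
  have hcg : Continuous fun y : ℝ => c * y - φ y := (by continuity : Continuous fun y : ℝ => c*y).sub h.continuous
  have Iφ : IntervalIntegrable (deriv φ) volume a b :=
    intervalIntegrable_of_bound (measurable_deriv φ) c (lip_abs_deriv_le h) a b
  have hdiff := h.ae_differentiableAt (μ := volume)
  have hfd : ∀ᵐ y, deriv (fun y => φ y + c * y) y = deriv φ y + c := by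
    filter_upwards [hdiff] with y hy
    have h1 : HasDerivAt (fun y => φ y + c * y) (deriv φ y + c * 1) y :=
      hy.hasDerivAt.add ((hasDerivAt_id y).const_mul c)
    simpa using h1.deriv
  have hgd : ∀ᵐ y, deriv (fun y => c * y - φ y) y = c - deriv φ y := by
    filter_upwards [hdiff] with y hy
    have h1 : HasDerivAt (fun y => c * y - φ y) (c * 1 - deriv φ y) y :=
      ((hasDerivAt_id y).const_mul c).sub hy.hasDerivAt
    simpa using h1.deriv
  have e1 : ∫ y in a..b, deriv (fun y => φ y + c * y) y
      = (∫ y in a..b, deriv φ y) + c * (b - a) := by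
    rw [intervalIntegral.integral_congr_ae
      (by filter_upwards [hfd] with y hy _; exact hy)]
    rw [intervalIntegral.integral_add Iφ intervalIntegrable_const,
      intervalIntegral.integral_const, smul_eq_mul]
    ring
  have e2 : ∫ y in a..b, deriv (fun y => c * y - φ y) y
      = c * (b - a) - ∫ y in a..b, deriv φ y := by
    rw [intervalIntegral.integral_congr_ae
      (by filter_upwards [hgd] with y hy _; exact hy)]
    rw [intervalIntegral.integral_sub intervalIntegrable_const Iφ,
      intervalIntegral.integral_const, smul_eq_mul]
    ring
  have i1 := mono_integral_deriv_le hmf hcf hab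
  have i2 := mono_integral_deriv_le hmg hcg hab
  rw [e1] at i1
  rw [e2] at i2
  linarith

lemma integral_sq_cauchy_schwarz {u : ℝ → ℝ} (hu : Measurable u) (C : ℝ)
    (hC : ∀ x, |u x| ≤ C) {a b : ℝ} (hab : a ≤ b) :
    (∫ y in a..b, u y) ^ 2 ≤ (b - a) * ∫ y in a..b, (u y) ^ 2 := by
  rcases eq_or_lt_of_le hab with rfl | hlt
  · simp
  have hb : 0 < b - a := by linarith
  have Iu : IntervalIntegrable u volume a b := intervalIntegrable_of_bound hu C hC a b
  have Iu2 : IntervalIntegrable (fun y => (u y) ^ 2) volume a b := by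
    refine intervalIntegrable_of_bound (hu.pow_const 2) (C ^ 2) (fun x => ?_) a b
    have h1 := hC x
    have h2 := abs_nonneg (u x)
    rw [abs_of_nonneg (sq_nonneg (u x))]
    calc u x ^ 2 = |u x| ^ 2 := (sq_abs _).symm
      _ ≤ C ^ 2 := pow_le_pow_left₀ h2 h1 2
  set I := ∫ y in a..b, u y with hI
  set J := ∫ y in a..b, (u y) ^ 2 with hJ
  set m := I / (b - a) with hm
  have key : 0 ≤ ∫ y in a..b, (u y - m) ^ 2 :=
    intervalIntegral.integral_nonneg hab fun y _ => sq_nonneg _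
  have expand : ∫ y in a..b, (u y - m) ^ 2 = J - 2 * m * I + m ^ 2 * (b - a) := by
    have e : ∀ y, (u y - m) ^ 2 = (u y) ^ 2 - 2 * m * u y + m ^ 2 := fun y => by ring
    rw [intervalIntegral.integral_congr (g := fun y => (u y) ^ 2 - 2 * m * u y + m ^ 2)
      (fun y _ => e y),
      intervalIntegral.integral_add (Iu2.sub (Iu.const_mul (2 * m)))
      intervalIntegrable_const,
      intervalIntegral.integral_sub Iu2 (Iu.const_mul (2 * m)),
      intervalIntegral.integral_const_mul, intervalIntegral.integral_const, smul_eq_mul]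
    ring
  rw [expand] at key
  have hmI : m * (b - a) = I := div_mul_cancel₀ I hb.ne'
  nlinarith [mul_nonneg hb.le key]

lemma trace_ineq {K : NNReal} {φ : ℝ → ℝ} (h : LipschitzWith K φ)
    {hh : ℝ} (h0 : 0 < hh) (h1 : hh ≤ 1) :
    φ 0 ^ 2 ≤ 2 * hh * (∫ y in (-1:ℝ)..1, (deriv φ y) ^ 2)
      + (2 / hh) * ∫ y in (-1:ℝ)..1, (φ y) ^ 2 := by
  set P := ∫ y in (-1:ℝ)..1, (deriv φ y) ^ 2 with hP
  set Q := ∫ y in (-1:ℝ)..1, (φ y) ^ 2 with hQ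
  have hd2meas : Measurable fun y => (deriv φ y) ^ 2 := (measurable_deriv φ).pow_const 2
  have hd2bd : ∀ x, |(deriv φ x) ^ 2| ≤ (K:ℝ) ^ 2 := by
    intro x
    have h1 := lip_abs_deriv_le h x
    have h2 := abs_nonneg (deriv φ x)
    rw [abs_of_nonneg (sq_nonneg _)]
    calc deriv φ x ^ 2 = |deriv φ x| ^ 2 := (sq_abs _).symm
      _ ≤ (K:ℝ) ^ 2 := pow_le_pow_left₀ h2 h1 2
  have Id2 : ∀ a b : ℝ, IntervalIntegrable (fun y => (deriv φ y) ^ 2) volume a b :=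
    fun a b => intervalIntegrable_of_bound hd2meas _ hd2bd a b
  have hPnn : 0 ≤ P := intervalIntegral.integral_nonneg (by norm_num) fun y _ => sq_nonneg _
  -- pointwise bound for y ∈ Icc (-hh) 0
  have hpt : ∀ y ∈ Icc (-hh) (0:ℝ), φ 0 ^ 2 ≤ 2 * (φ y) ^ 2 + 2 * hh * P := by
    intro y hy
    obtain ⟨hy1, hy2⟩ := hy
    have hftc : φ 0 = φ y + ∫ t in y..(0:ℝ), deriv φ t := by
      rw [lip_integral_deriv_eq h hy2]; ring
    have hcs : (∫ t in y..(0:ℝ), deriv φ t) ^ 2 ≤ (0 - y) * ∫ t in y..(0:ℝ), (deriv φ t) ^ 2 :=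
      integral_sq_cauchy_schwarz (measurable_deriv φ) _ (lip_abs_deriv_le h) hy2
    have hsub : ∫ t in y..(0:ℝ), (deriv φ t) ^ 2 ≤ P := by
      refine intervalIntegral.integral_mono_interval (by linarith) hy2 (by norm_num) ?_ (Id2 _ _)
      exact Filter.Eventually.of_forall fun t => sq_nonneg _
    have hsubnn : 0 ≤ ∫ t in y..(0:ℝ), (deriv φ t) ^ 2 :=
      intervalIntegral.integral_nonneg hy2 fun t _ => sq_nonneg _
    have hyb : 0 - y ≤ hh := by linarith
    have hprod : (0 - y) * ∫ t in y..(0:ℝ), (deriv φ t) ^ 2 ≤ hh * P := by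
      apply mul_le_mul hyb hsub hsubnn (by linarith)
    rw [hftc]
    nlinarith [sq_nonneg (φ y - ∫ t in y..(0:ℝ), deriv φ t), hcs, hprod]
  -- integrate over y ∈ [-hh, 0]
  have hφcont : Continuous φ := h.continuous
  have Iφ2 : ∀ a b : ℝ, IntervalIntegrable (fun y => (φ y) ^ 2) volume a b :=
    fun a b => ((hφcont.pow 2).intervalIntegrable a b)
  have hmono : ∫ y in (-hh)..(0:ℝ), φ 0 ^ 2 ≤ ∫ y in (-hh)..(0:ℝ), (2 * (φ y) ^ 2 + 2 * hh * P) := by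
    refine intervalIntegral.integral_mono_on (by linarith) intervalIntegrable_const ?_ hpt
    exact ((Iφ2 _ _).const_mul 2).add intervalIntegrable_const
  have lhs_eq : ∫ y in (-hh)..(0:ℝ), φ 0 ^ 2 = hh * φ 0 ^ 2 := by
    rw [intervalIntegral.integral_const, smul_eq_mul]; ring_nf
  have rhs_eq : ∫ y in (-hh)..(0:ℝ), (2 * (φ y) ^ 2 + 2 * hh * P)
      = 2 * (∫ y in (-hh)..(0:ℝ), (φ y) ^ 2) + 2 * hh ^ 2 * P := by
    rw [intervalIntegral.integral_add ((Iφ2 _ _).const_mul 2) intervalIntegrable_const,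
      intervalIntegral.integral_const_mul, intervalIntegral.integral_const, smul_eq_mul]
    ring
  have hQsub : ∫ y in (-hh)..(0:ℝ), (φ y) ^ 2 ≤ Q := by
    refine intervalIntegral.integral_mono_interval (by linarith) (by linarith) (by norm_num)
      ?_ (Iφ2 _ _)
    exact Filter.Eventually.of_forall fun t => sq_nonneg _
  have key : hh * φ 0 ^ 2 ≤ 2 * Q + 2 * hh ^ 2 * P := by
    rw [lhs_eq, rhs_eq] at hmono
    linarith
  have h2 : hh * (2 * hh * P + (2 / hh) * Q) = 2 * hh ^ 2 * P + 2 * Q := by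
    field_simp
  have h3 : hh * (φ 0 ^ 2) ≤ hh * (2 * hh * P + (2 / hh) * Q) := by
    rw [h2]; linarith
  exact le_of_mul_le_mul_left h3 h0

lemma Qpos {φ : ℝ → ℝ} (hc : Continuous φ)
    (hne : ¬ (∀ᵐ y ∂(volume.restrict (Icc (-1:ℝ) 1)), φ y = 0)) :
    0 < ∫ y in (-1:ℝ)..1, (φ y) ^ 2 := by
  rcases (intervalIntegral.integral_nonneg (by norm_num : (-1:ℝ) ≤ 1)
    (fun y _ => sq_nonneg (φ y))).lt_or_eq with h | h
  · exact h
  exfalso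
  apply hne
  have hInt : Integrable (fun y => (φ y) ^ 2) (volume.restrict (Ioc (-1:ℝ) 1)) :=
    (hc.pow 2).integrableOn_Ioc
  have h0 : ∫ y in Ioc (-1:ℝ) 1, (φ y) ^ 2 = 0 := by
    rw [← intervalIntegral.integral_of_le (by norm_num : (-1:ℝ) ≤ 1)]
    exact h.symm
  have hae : (fun y => (φ y) ^ 2) =ᶠ[ae (volume.restrict (Ioc (-1:ℝ) 1))] 0 :=
    (integral_eq_zero_iff_of_nonneg (fun y => sq_nonneg (φ y)) hInt).mp h0
  have hres : volume.restrict (Ioc (-1:ℝ) 1) = volume.restrict (Icc (-1:ℝ) 1) :=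
    Measure.restrict_congr_set Ioc_ae_eq_Icc
  rw [← hres]
  filter_upwards [hae] with y hy
  exact pow_eq_zero_iff (by norm_num) |>.mp hy

lemma sq_phi0_le {K : NNReal} {φ : ℝ → ℝ} (h : LipschitzWith K φ) (hm1 : φ (-1) = 0) :
    φ 0 ^ 2 ≤ ∫ y in (-1:ℝ)..1, (deriv φ y) ^ 2 := by
  have hftc : φ 0 = ∫ t in (-1:ℝ)..0, deriv φ t := by
    rw [lip_integral_deriv_eq h (by norm_num : (-1:ℝ) ≤ 0), hm1]; ring
  have hcs : (∫ t in (-1:ℝ)..0, deriv φ t) ^ 2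
      ≤ (0 - (-1)) * ∫ t in (-1:ℝ)..0, (deriv φ t) ^ 2 :=
    integral_sq_cauchy_schwarz (measurable_deriv φ) _ (lip_abs_deriv_le h) (by norm_num)
  have hsub : ∫ t in (-1:ℝ)..0, (deriv φ t) ^ 2 ≤ ∫ y in (-1:ℝ)..1, (deriv φ y) ^ 2 := by
    refine intervalIntegral.integral_mono_interval le_rfl (by norm_num) (by norm_num)
      (Filter.Eventually.of_forall fun t => sq_nonneg _)
      (intervalIntegrable_of_bound ((measurable_deriv φ).pow_const 2) ((K:ℝ)^2)
        (fun x => by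
          rw [abs_of_nonneg (sq_nonneg _)]
          calc deriv φ x ^ 2 = |deriv φ x| ^ 2 := (sq_abs _).symm
            _ ≤ (K:ℝ) ^ 2 := pow_le_pow_left₀ (abs_nonneg _) (lip_abs_deriv_le h x) 2) _ _)
  rw [hftc]
  linarith [hcs, hsub]

/-- The explicit upper bound for elements of `XihcSet`. -/
def Mf (g ρp ρm Bc b : ℝ) : ℝ :=
  (Bc ^ 2 - b ^ 2) * (2 * (g * (ρp - ρm)) / min 1 (b ^ 2 / (4 * (g * (ρp - ρm)))))
    / ((Bc ^ 2 - b ^ 2 / 2) * b ^ 2)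

set_option maxHeartbeats 1000000 in
lemma xihc_upper {g ρp ρm Bc b : ℝ} (hG : 0 < g * (ρp - ρm)) (hBc : 0 < Bc)
    (hBcsq : Bc ^ 2 = sSup (BcSet g ρp ρm)) (hb : 0 < b) (hbBc : b < Bc) :
    ∀ r ∈ XihcSet g ρp ρm b, r ≤ Mf g ρp ρm Bc b := by
  intro r hr
  obtain ⟨φ, ⟨K, hK⟩, hm1, hp1, hne, hreq⟩ := hr
  have hbdd : BddAbove (BcSet g ρp ρm) := by
    by_contra hcon
    rw [Real.sSup_of_not_bddAbove hcon] at hBcsq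
    nlinarith
  have hb2 : 0 < b ^ 2 := pow_pos hb 2
  set G := g * (ρp - ρm) with hGdef
  set P := ∫ y in (-1:ℝ)..1, (deriv φ y) ^ 2 with hPdef
  set Q := ∫ y in (-1:ℝ)..1, (φ y) ^ 2 with hQdef
  set hh := min 1 (b ^ 2 / (4 * G)) with hhdef
  set N := G * φ 0 ^ 2 - b ^ 2 * P with hNdef
  have hG' : 0 < G := hG
  have hQ : 0 < Q := Qpos hK.continuous hne
  have hPnn : 0 ≤ P :=
    intervalIntegral.integral_nonneg (by norm_num) fun y _ => sq_nonneg _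
  have hphi0 : φ 0 ^ 2 ≤ P := sq_phi0_le hK hm1
  have hmem : G * φ 0 ^ 2 / P ∈ BcSet g ρp ρm := ⟨φ, ⟨K, hK⟩, hm1, hp1, hne, rfl⟩
  have hrB : G * φ 0 ^ 2 / P ≤ Bc ^ 2 := by rw [hBcsq]; exact le_csSup hbdd hmem
  have hh0 : 0 < hh := lt_min one_pos (div_pos hb2 (by linarith))
  have hh1 : hh ≤ 1 := min_le_left _ _
  have hhb : hh ≤ b ^ 2 / (4 * G) := min_le_right _ _
  have hT : φ 0 ^ 2 ≤ 2 * hh * P + (2 / hh) * Q := trace_ineq hK hh0 hh1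
  rw [hreq]
  simp only [Mf]
  rw [← hGdef, ← hhdef]
  clear_value G P Q hh N
  clear hreq hmem hne hK hm1 hp1 hbdd hBcsq hGdef hPdef hQdef hhdef
  have hCineq : G * φ 0 ^ 2 ≤ Bc ^ 2 * P := by
    rcases hPnn.eq_or_lt with hP0 | hPpos
    · have h00 : φ 0 ^ 2 = 0 := le_antisymm (by linarith) (sq_nonneg _)
      rw [h00, ← hP0]
      ring_nf
      exact le_rfl
    · calc G * φ 0 ^ 2 = (G * φ 0 ^ 2 / P) * P := by field_simp
        _ ≤ Bc ^ 2 * P := mul_le_mul_of_nonneg_right hrB hPnn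
  have hGT : G * φ 0 ^ 2 ≤ 2 * hh * G * P + (2 * G / hh) * Q := by
    have h5 := mul_le_mul_of_nonneg_left hT hG'.le
    have heq : G * (2 * hh * P + (2 / hh) * Q) = 2 * hh * G * P + (2 * G / hh) * Q := by
      field_simp
    linarith [heq ▸ h5]
  have hhG : 2 * hh * G ≤ b ^ 2 / 2 := by
    have h6 := mul_le_mul_of_nonneg_left hhb (by linarith : (0:ℝ) ≤ 2 * G)
    calc 2 * hh * G = 2 * G * hh := by ring
      _ ≤ 2 * G * (b ^ 2 / (4 * G)) := h6
      _ = b ^ 2 / 2 := by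
          rw [mul_div_assoc']
          rw [div_eq_div_iff (by linarith) (by norm_num)]
          ring
  have hi : N ≤ (Bc ^ 2 - b ^ 2) * P := by rw [hNdef]; nlinarith [hCineq]
  have hii : N ≤ -(b ^ 2 / 2) * P + (2 * G / hh) * Q := by
    rw [hNdef]
    nlinarith [hGT, mul_le_mul_of_nonneg_right hhG hPnn]
  have hBb : 0 < Bc ^ 2 - b ^ 2 := by nlinarith
  have hBb2 : 0 < Bc ^ 2 - b ^ 2 / 2 := by nlinarith
  have k1 : N * (b ^ 2 / 2) ≤ (Bc ^ 2 - b ^ 2) * P * (b ^ 2 / 2) :=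
    mul_le_mul_of_nonneg_right hi (by linarith)
  have k2 : N * (Bc ^ 2 - b ^ 2) ≤ (-(b ^ 2 / 2) * P + (2 * G / hh) * Q) * (Bc ^ 2 - b ^ 2) :=
    mul_le_mul_of_nonneg_right hii hBb.le
  have key : N * (Bc ^ 2 - b ^ 2 / 2) ≤ (Bc ^ 2 - b ^ 2) * (2 * G / hh) * Q := by
    nlinarith [k1, k2]
  rw [div_le_div_iff₀ (mul_pos hb2 hQ) (mul_pos hBb2 hb2)]
  nlinarith [mul_le_mul_of_nonneg_right key hb2.le]

def tent : ℝ → ℝ := fun y => 1 - |y|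

lemma tent_lip : LipschitzWith 1 tent :=
  LipschitzWith.of_dist_le_mul fun x y => by
    rw [Real.dist_eq, Real.dist_eq]
    have h1 : tent x - tent y = |y| - |x| := by simp only [tent]; ring
    rw [h1]
    calc |(|y| - |x|)| ≤ |y - x| := abs_abs_sub_abs_le_abs_sub y x
      _ = 1 * |x - y| := by rw [abs_sub_comm]; ring

lemma tent_m1 : tent (-1) = 0 := by simp [tent]
lemma tent_p1 : tent 1 = 0 := by simp [tent]
lemma tent_0 : tent 0 = 1 := by simp [tent]

lemma tent_ne : ¬ (∀ᵐ y ∂(volume.restrict (Icc (-1:ℝ) 1)), tent y = 0) := by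
  intro hae
  have h2 : ∀ᵐ y ∂(volume : Measure ℝ), y ∈ Icc (-1:ℝ) 1 → tent y = 0 :=
    (ae_restrict_iff' measurableSet_Icc).mp hae
  rw [ae_iff] at h2
  have hsub : Ioo (-1:ℝ) 1 ⊆ {y | ¬(y ∈ Icc (-1:ℝ) 1 → tent y = 0)} := by
    intro y hy
    simp only [mem_setOf_eq, Classical.not_imp]
    refine ⟨Ioo_subset_Icc_self hy, ?_⟩
    have : |y| < 1 := abs_lt.mpr ⟨hy.1, hy.2⟩
    simp only [tent]
    intro hcon
    linarith [this, hcon]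
  have := measure_mono_null hsub h2
  rw [Real.volume_Ioo] at this
  norm_num at this

lemma tent_deriv_neg {y : ℝ} (hy : y < 0) : deriv tent y = 1 := by
  have hev : tent =ᶠ[𝓝 y] fun t => 1 + t := by
    filter_upwards [Iio_mem_nhds hy] with t ht
    simp only [tent, abs_of_neg (mem_Iio.mp ht)]; ring
  rw [hev.deriv_eq]
  simpa using ((hasDerivAt_id y).const_add (1:ℝ)).deriv

lemma tent_deriv_pos {y : ℝ} (hy : 0 < y) : deriv tent y = -1 := by
  have hev : tent =ᶠ[𝓝 y] fun t => 1 - t := by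
    filter_upwards [Ioi_mem_nhds hy] with t ht
    simp only [tent, abs_of_pos (mem_Ioi.mp ht)]
  rw [hev.deriv_eq]
  simpa using ((hasDerivAt_id y).const_sub (1:ℝ)).deriv

lemma tent_P : ∫ y in (-1:ℝ)..1, (deriv tent y) ^ 2 = 2 := by
  have hbd : ∀ x, |(deriv tent x) ^ 2| ≤ ((1:NNReal):ℝ) ^ 2 := fun x => by
    rw [abs_of_nonneg (sq_nonneg _)]
    calc deriv tent x ^ 2 = |deriv tent x| ^ 2 := (sq_abs _).symm
      _ ≤ ((1:NNReal):ℝ) ^ 2 := pow_le_pow_left₀ (abs_nonneg _) (lip_abs_deriv_le tent_lip x) 2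
  have hInt : ∀ a b : ℝ, IntervalIntegrable (fun y => (deriv tent y) ^ 2) volume a b :=
    fun a b => intervalIntegrable_of_bound ((measurable_deriv tent).pow_const 2) _ hbd a b
  have h0 : ∀ᵐ x : ℝ ∂volume, x ≠ 0 := by
    rw [ae_iff]
    simp only [not_not, Set.setOf_eq_eq_singleton]
    exact Real.volume_singleton
  have hleft : ∫ y in (-1:ℝ)..0, (deriv tent y) ^ 2 = 1 := by
    rw [intervalIntegral.integral_congr_ae (g := fun _ => (1:ℝ))]
    · simp
    · filter_upwards [h0] with x hx hmem
      rw [Set.uIoc_of_le (by norm_num : (-1:ℝ) ≤ 0)] at hmem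
      have : x < 0 := lt_of_le_of_ne hmem.2 hx
      rw [tent_deriv_neg this]
      norm_num
  have hright : ∫ y in (0:ℝ)..1, (deriv tent y) ^ 2 = 1 := by
    rw [intervalIntegral.integral_congr_ae (g := fun _ => (1:ℝ))]
    · simp
    · refine Filter.Eventually.of_forall fun x hmem => ?_
      rw [Set.uIoc_of_le (by norm_num : (0:ℝ) ≤ 1)] at hmem
      rw [tent_deriv_pos hmem.1]
      norm_num
  rw [← intervalIntegral.integral_add_adjacent_intervals (hInt (-1) 0) (hInt 0 1),
    hleft, hright]
  norm_num

lemma tent_Q : ∫ y in (-1:ℝ)..1, (tent y) ^ 2 = 2 / 3 := by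
  have hc : Continuous tent := tent_lip.continuous
  have hInt : ∀ a b : ℝ, IntervalIntegrable (fun y => (tent y) ^ 2) volume a b :=
    fun a b => ((hc.pow 2).intervalIntegrable a b)
  have hleft : ∫ y in (-1:ℝ)..0, (tent y) ^ 2 = 1 / 3 := by
    rw [intervalIntegral.integral_congr (g := fun y => (y + 1) ^ 2)]
    · have := intervalIntegral.integral_comp_add_right (a := (-1:ℝ)) (b := 0)
        (fun x => x ^ 2) 1
      rw [this]
      norm_num [integral_pow]
    · intro y hy
      rw [Set.uIcc_of_le (by norm_num : (-1:ℝ) ≤ 0)] at hy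
      simp only [tent, abs_of_nonpos hy.2]
      ring
  have hright : ∫ y in (0:ℝ)..1, (tent y) ^ 2 = 1 / 3 := by
    rw [intervalIntegral.integral_congr (g := fun y => (1 - y) ^ 2)]
    · have := intervalIntegral.integral_comp_sub_left (a := (0:ℝ)) (b := 1)
        (fun x => x ^ 2) 1
      rw [this]
      norm_num [integral_pow]
    · intro y hy
      rw [Set.uIcc_of_le (by norm_num : (0:ℝ) ≤ 1)] at hy
      simp only [tent, abs_of_nonneg hy.1]
  rw [← intervalIntegral.integral_add_adjacent_intervals (hInt (-1) 0) (hInt 0 1),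
    hleft, hright]
  norm_num

/-- as a function of `B ∈ (0, |B|_c)`, the horizontal critical frequency tends to
`+∞` as `B → 0⁺` and to `0` as `B → |B|_c⁻`. -/
theorem horizontal_critical_frequency_limits
    (ρp ρm g Bc : ℝ)
    (hρm : 0 < ρm) (hρ : ρm < ρp) (hg : 0 < g)
    (hBc : 0 < Bc) (hBcsq : Bc ^ 2 = sSup (BcSet g ρp ρm)) :
    ∀ f : ℝ → ℝ,
      (∀ b : ℝ, 0 < b → b < Bc → 0 ≤ f b ∧ (f b) ^ 2 = sSup (XihcSet g ρp ρm b)) →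
      Tendsto f (𝓝[Ioo (0:ℝ) Bc] 0) atTop ∧
      Tendsto f (𝓝[Ioo (0:ℝ) Bc] Bc) (𝓝 0) := by
  intro f hf
  have hGpos : 0 < g * (ρp - ρm) := mul_pos hg (by linarith)
  have htmem : ∀ b : ℝ, (g * (ρp - ρm) - b ^ 2 * 2) / (b ^ 2 * (2 / 3))
      ∈ XihcSet g ρp ρm b := by
    intro b
    refine ⟨tent, ⟨1, tent_lip⟩, tent_m1, tent_p1, tent_ne, ?_⟩
    rw [tent_0, tent_P, tent_Q]
    norm_num
  have hbddX : ∀ b : ℝ, 0 < b → b < Bc → BddAbove (XihcSet g ρp ρm b) :=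
    fun b hb1 hb2 => ⟨Mf g ρp ρm Bc b, fun r hr => xihc_upper hGpos hBc hBcsq hb1 hb2 r hr⟩
  have hmin_pos : ∀ b : ℝ, 0 < b → 0 < min 1 (b ^ 2 / (4 * (g * (ρp - ρm)))) :=
    fun b hb1 => lt_min one_pos (div_pos (pow_pos hb1 2) (by linarith))
  have hMf_nonneg : ∀ b : ℝ, 0 < b → b < Bc → 0 ≤ Mf g ρp ρm Bc b := by
    intro b hb1 hb2
    have h1 : (0:ℝ) ≤ Bc ^ 2 - b ^ 2 := by nlinarith
    have h2 : (0:ℝ) ≤ 2 * (g * (ρp - ρm)) / min 1 (b ^ 2 / (4 * (g * (ρp - ρm)))) :=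
      div_nonneg (by linarith) (hmin_pos b hb1).le
    have h3 : (0:ℝ) < (Bc ^ 2 - b ^ 2 / 2) * b ^ 2 :=
      mul_pos (by nlinarith) (pow_pos hb1 2)
    exact div_nonneg (mul_nonneg h1 h2) h3.le
  have hub : ∀ b : ℝ, 0 < b → b < Bc → f b ≤ Real.sqrt (Mf g ρp ρm Bc b) := by
    intro b hb1 hb2
    obtain ⟨hf0, hf2⟩ := hf b hb1 hb2
    have hsup : sSup (XihcSet g ρp ρm b) ≤ Mf g ρp ρm Bc b :=
      Real.sSup_le (xihc_upper hGpos hBc hBcsq hb1 hb2) (hMf_nonneg b hb1 hb2)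
    have h2 : f b ^ 2 ≤ Mf g ρp ρm Bc b := by rw [hf2]; exact hsup
    calc f b = Real.sqrt (f b ^ 2) := (Real.sqrt_sq hf0).symm
      _ ≤ _ := Real.sqrt_le_sqrt h2
  constructor
  · -- b → 0⁺ : f → atTop
    have hev0 : ∀ᶠ b in 𝓝[Ioo (0:ℝ) Bc] (0:ℝ), b ∈ Ioo (0:ℝ) Bc := eventually_mem_nhdsWithin
    have tr0 : Tendsto (fun b : ℝ => (g * (ρp - ρm) - b ^ 2 * 2) / (b ^ 2 * (2 / 3)))
        (𝓝[Ioo (0:ℝ) Bc] 0) atTop := by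
      have h1 : Tendsto (fun b : ℝ => b ^ 2) (𝓝[Ioo (0:ℝ) Bc] 0) (𝓝[>] 0) := by
        apply tendsto_nhdsWithin_of_tendsto_nhds_of_eventually_within
        · have h2 : Tendsto (fun b : ℝ => b ^ 2) (𝓝 0) (𝓝 0) := by
            simpa using (continuous_pow 2).tendsto (0:ℝ)
          exact h2.mono_left nhdsWithin_le_nhds
        · filter_upwards [hev0] with b hb
          exact mem_Ioi.mpr (pow_pos hb.1 2)
      have h2 : Tendsto (fun b : ℝ => (b ^ 2)⁻¹) (𝓝[Ioo (0:ℝ) Bc] 0) atTop :=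
        tendsto_inv_nhdsGT_zero.comp h1
      have h3 : Tendsto (fun b : ℝ => 3 / 2 * (g * (ρp - ρm)) * (b ^ 2)⁻¹)
          (𝓝[Ioo (0:ℝ) Bc] 0) atTop := h2.const_mul_atTop (by linarith)
      have h4 := tendsto_atTop_add_const_right (𝓝[Ioo (0:ℝ) Bc] (0:ℝ)) (-3 : ℝ) h3
      refine h4.congr' ?_
      filter_upwards [hev0] with b hb
      have hb2 : b ^ 2 ≠ 0 := (pow_pos hb.1 2).ne'
      field_simp
      rw [sub_div, mul_div_cancel_right₀ _ hb2]; ring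
    rw [tendsto_atTop]
    intro M
    have hA0 : (0:ℝ) ≤ max M 0 := le_max_right M 0
    filter_upwards [hev0, tr0.eventually_ge_atTop ((max M 0) ^ 2)] with b hb hrb
    obtain ⟨hf0, hf2⟩ := hf b hb.1 hb.2
    have hge : (g * (ρp - ρm) - b ^ 2 * 2) / (b ^ 2 * (2 / 3)) ≤ f b ^ 2 := by
      rw [hf2]
      exact le_csSup (hbddX b hb.1 hb.2) (htmem b)
    have hA : max M 0 ≤ f b := by
      have h1 : (max M 0) ^ 2 ≤ f b ^ 2 := le_trans hrb hge
      calc max M 0 = Real.sqrt ((max M 0) ^ 2) := (Real.sqrt_sq hA0).symm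
        _ ≤ Real.sqrt (f b ^ 2) := Real.sqrt_le_sqrt h1
        _ = f b := Real.sqrt_sq hf0
    exact le_trans (le_max_left M 0) hA
  · -- b → Bc⁻ : f → 0
    have hevBc : ∀ᶠ b in 𝓝[Ioo (0:ℝ) Bc] Bc, b ∈ Ioo (0:ℝ) Bc := eventually_mem_nhdsWithin
    have hcont : ContinuousAt (fun b => Mf g ρp ρm Bc b) Bc := by
      have c1 : ContinuousAt (fun b : ℝ => Bc ^ 2 - b ^ 2) Bc :=
        continuousAt_const.sub ((continuous_pow 2).continuousAt)
      have c2 : ContinuousAt (fun b : ℝ => min 1 (b ^ 2 / (4 * (g * (ρp - ρm))))) Bc :=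
        continuousAt_const.min (((continuous_pow 2).continuousAt).div continuousAt_const
          (by positivity))
      have c3 : ContinuousAt
          (fun b : ℝ => 2 * (g * (ρp - ρm)) / min 1 (b ^ 2 / (4 * (g * (ρp - ρm))))) Bc :=
        continuousAt_const.div c2 (hmin_pos Bc hBc).ne'
      have c4 : ContinuousAt (fun b : ℝ => (Bc ^ 2 - b ^ 2 / 2) * b ^ 2) Bc :=
        (continuousAt_const.sub (((continuous_pow 2).continuousAt).div continuousAt_const
          (by norm_num))).mul ((continuous_pow 2).continuousAt)
      have hden : (Bc ^ 2 - Bc ^ 2 / 2) * Bc ^ 2 ≠ 0 := by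
        have hb2 : (0:ℝ) < Bc ^ 2 := pow_pos hBc 2
        have : (0:ℝ) < (Bc ^ 2 - Bc ^ 2 / 2) * Bc ^ 2 := by nlinarith [hb2]
        exact this.ne'
      exact (c1.mul c3).div c4 hden
    have hM0 : Mf g ρp ρm Bc Bc = 0 := by
      unfold Mf
      norm_num
    have hMten : Tendsto (fun b => Mf g ρp ρm Bc b) (𝓝[Ioo (0:ℝ) Bc] Bc) (𝓝 0) := by
      have h6 : Tendsto (fun b => Mf g ρp ρm Bc b) (𝓝[Ioo (0:ℝ) Bc] Bc)
          (𝓝 (Mf g ρp ρm Bc Bc)) := hcont.tendsto.mono_left nhdsWithin_le_nhds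
      rwa [hM0] at h6
    have hMsqrt : Tendsto (fun b => Real.sqrt (Mf g ρp ρm Bc b))
        (𝓝[Ioo (0:ℝ) Bc] Bc) (𝓝 0) := by
      have h5 := (Real.continuous_sqrt.tendsto (0:ℝ)).comp hMten
      simpa [Function.comp_def, Real.sqrt_zero] using h5
    refine tendsto_of_tendsto_of_tendsto_of_le_of_le' tendsto_const_nhds hMsqrt ?_ ?_
    · filter_upwards [hevBc] with b hb
      exact (hf b hb.1 hb.2).1
    · filter_upwards [hevBc] with b hb
      exact hub b hb.1 hb.2
end
end

section
/- If ψ ∈ C²([−1,1]) with ψ(−1) = ψ(1) = ψ′(−1) = ψ′(1) = 0 and ξ ≠ 0 satisfy E₀(ψ) < 0, then necessarily ψ(0) ≠ 0, |B| < |B|_c, and |ξ| > |ξ|_{vc}^B. -/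
open MeasureTheory Set Filter Topology

noncomputable section

/-- The magnetic part `E₀` of the energy of the vertical problem. -/
def E0 (g ρp ρm B ξ : ℝ) (ψ : ℝ → ℝ) : ℝ :=
  (1/2) * (∫ y in (-1:ℝ)..1, B ^ 2 * ((deriv ψ y) ^ 2 + (deriv (deriv ψ) y) ^ 2 / ξ ^ 2)) -
    (1/2) * (g * (ρp - ρm)) * (ψ 0) ^ 2

/-- The viscous part `E₁` of the energy, with piecewise viscosity `μ₊` above, `μ₋` below. -/
def E1 (μp μm ξ : ℝ) (ψ : ℝ → ℝ) : ℝ :=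
  (1/2) * ∫ y in (-1:ℝ)..1,
    (if 0 < y then μp else μm) *
      (4 * ξ ^ 2 * (deriv ψ y) ^ 2 + (ξ ^ 2 * ψ y + deriv (deriv ψ) y) ^ 2)

/-- The normalization functional `J`, with piecewise density `ρ₊` above, `ρ₋` below. -/
def Jfun (ρp ρm ξ : ℝ) (ψ : ℝ → ℝ) : ℝ :=
  (1/2) * ∫ y in (-1:ℝ)..1,
    (if 0 < y then ρp else ρm) * (ξ ^ 2 * (ψ y) ^ 2 + (deriv ψ y) ^ 2)

/-- `ψ` is an admissible test function: `C²` with vanishing boundary values of `ψ` and `ψ'`. -/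
def Adm (ψ : ℝ → ℝ) : Prop :=
  ContDiff ℝ 2 ψ ∧ ψ (-1) = 0 ∧ ψ 1 = 0 ∧ deriv ψ (-1) = 0 ∧ deriv ψ 1 = 0

/-- `α(s)`: the infimum of the modified energy `E(ψ;s) = ξ²E₀(ψ) + sE₁(ψ)` over admissible
`ψ` normalized by `J(ψ) = 1`. -/
def alpha (ρp ρm μp μm g B ξ s : ℝ) : ℝ :=
  sInf {r : ℝ | ∃ ψ : ℝ → ℝ, Adm ψ ∧ Jfun ρp ρm ξ ψ = 1 ∧
    r = ξ ^ 2 * E0 g ρp ρm B ξ ψ + s * E1 μp μm ξ ψ}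

set_option maxHeartbeats 1000000 in
/-- if `E₀(ψ) < 0` for an admissible `ψ`, then `ψ(0) ≠ 0`, `|B| < |B|_c`, and
`|ξ| > |ξ|_{vc}^B`. -/
theorem E0_neg_necessary_conditions
    (ρp ρm g B Bc : ℝ)
    (hρm : 0 < ρm) (hρ : ρm < ρp) (hg : 0 < g)
    (hB : B ≠ 0) (hBc : 0 < Bc) (hBcsq : Bc ^ 2 = sSup (BcSet g ρp ρm))
    (ξ : ℝ) (hξ : ξ ≠ 0) (ψ : ℝ → ℝ) (hψ : Adm ψ)
    (hneg : E0 g ρp ρm B ξ ψ < 0) :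
    ψ 0 ≠ 0 ∧ |B| < Bc ∧
      ∀ xivc : ℝ, 0 ≤ xivc → xivc ^ 2 = sInf (XivcSet g ρp ρm B) → xivc < |ξ| := by
  obtain ⟨hC2, hm1, h1, hdm1, hd1⟩ := hψ
  have hdiff : Differentiable ℝ ψ := hC2.differentiable (by norm_num)
  have hcont : Continuous ψ := hC2.continuous
  have hdc : Continuous (deriv ψ) := hC2.continuous_deriv (by norm_num)
  have hC1d : ContDiff ℝ 1 (deriv ψ) := by
    have h2 : (2 : WithTop ℕ∞) = 1 + 1 := by norm_num
    rw [h2] at hC2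
    exact (contDiff_succ_iff_deriv.mp hC2).2.2
  have hddc : Continuous (deriv (deriv ψ)) := hC1d.continuous_deriv le_rfl
  set I1 : ℝ := ∫ y in (-1:ℝ)..1, (deriv ψ y) ^ 2 with hI1def
  set I2 : ℝ := ∫ y in (-1:ℝ)..1, (deriv (deriv ψ) y) ^ 2 with hI2def
  have hI1nn : 0 ≤ I1 :=
    intervalIntegral.integral_nonneg (by norm_num) (fun u _ => sq_nonneg _)
  have hI2nn : 0 ≤ I2 :=
    intervalIntegral.integral_nonneg (by norm_num) (fun u _ => sq_nonneg _)
  have hB2 : 0 < B ^ 2 := by positivity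
  have hξ2 : 0 < ξ ^ 2 := by positivity
  have hgρ : 0 < g * (ρp - ρm) := by nlinarith
  -- split the energy integral
  have hint : (∫ y in (-1:ℝ)..1, B ^ 2 * ((deriv ψ y) ^ 2 + (deriv (deriv ψ) y) ^ 2 / ξ ^ 2))
      = B ^ 2 * I1 + (B ^ 2 / ξ ^ 2) * I2 := by
    rw [intervalIntegral.integral_congr
      (g := fun y => B ^ 2 * (deriv ψ y) ^ 2 + (B ^ 2 / ξ ^ 2) * (deriv (deriv ψ) y) ^ 2)
      (fun y _ => by ring),
      intervalIntegral.integral_add (f := fun y => B ^ 2 * (deriv ψ y) ^ 2)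
        (g := fun y => (B ^ 2 / ξ ^ 2) * (deriv (deriv ψ) y) ^ 2)
        ((continuous_const.mul (hdc.pow 2)).intervalIntegrable _ _)
        ((continuous_const.mul (hddc.pow 2)).intervalIntegrable _ _),
      intervalIntegral.integral_const_mul, intervalIntegral.integral_const_mul]
  have hkey : B ^ 2 * I1 + (B ^ 2 / ξ ^ 2) * I2 < g * (ρp - ρm) * (ψ 0) ^ 2 := by
    unfold E0 at hneg
    rw [hint] at hneg
    nlinarith
  have htail : 0 ≤ (B ^ 2 / ξ ^ 2) * I2 := mul_nonneg (by positivity) hI2nn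
  have hBI1 : 0 ≤ B ^ 2 * I1 := mul_nonneg hB2.le hI1nn
  -- first claim
  have hψ0 : ψ 0 ≠ 0 := by
    intro h0
    rw [h0] at hkey
    nlinarith
  -- positivity of I1
  obtain ⟨c, hc, hcslope⟩ := exists_deriv_eq_slope (a := 0) (b := 1) ψ one_pos
    hcont.continuousOn (hdiff.differentiableOn)
  have hcne : deriv ψ c ≠ 0 := by
    rw [hcslope, h1]
    simpa using hψ0
  have hI1pos : 0 < I1 := by
    rw [hI1def, intervalIntegral.integral_pos_iff_support_of_nonneg_ae
      (Filter.Eventually.of_forall (fun y => sq_nonneg _))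
      ((hdc.pow 2).intervalIntegrable _ _)]
    refine ⟨by norm_num, ?_⟩
    have hev : ∀ᶠ y in nhds c, deriv ψ y ≠ 0 := (hdc.continuousAt).eventually_ne hcne
    obtain ⟨ε, hε, hball⟩ := Metric.eventually_nhds_iff.mp hev
    set δ : ℝ := min ε (min c (1 - c)) with hδdef
    have hδpos : 0 < δ := lt_min hε (lt_min hc.1 (by linarith [hc.2]))
    have hsub : Set.Ioo (c - δ) (c + δ) ⊆
        Function.support (fun y => (deriv ψ y) ^ 2) ∩ Set.Ioc (-1 : ℝ) 1 := by
      intro y hy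
      have hdist : dist y c < ε := by
        rw [Real.dist_eq, abs_lt]
        constructor
        · have := hy.1; have : c - ε ≤ c - δ := by
            have : δ ≤ ε := min_le_left _ _
            linarith
          linarith [hy.1]
        · have : δ ≤ ε := min_le_left _ _
          linarith [hy.2]
      refine ⟨?_, ?_, ?_⟩
      · exact pow_ne_zero 2 (hball hdist)
      · have hδc : δ ≤ c := le_trans (min_le_right _ _) (min_le_left _ _)
        linarith [hy.1, hc.1]
      · have hδ1c : δ ≤ 1 - c := le_trans (min_le_right _ _) (min_le_right _ _)
        linarith [hy.2]
    calc (0 : ENNReal) < volume (Set.Ioo (c - δ) (c + δ)) := by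
          rw [Real.volume_Ioo]
          simp only [ENNReal.ofReal_pos]
          linarith
      _ ≤ _ := measure_mono hsub
  -- the clamped test function
  set φ : ℝ → ℝ := fun y => ψ (max (-1) (min 1 y)) with hφdef
  have hφeq : Set.EqOn φ ψ (Set.Icc (-1 : ℝ) 1) := by
    intro y hy
    simp only [hφdef]
    rw [min_eq_right hy.2, max_eq_right hy.1]
  have hφ0 : φ 0 = ψ 0 := hφeq (by norm_num)
  have hφm1 : φ (-1) = 0 := by rw [hφeq (by norm_num)]; exact hm1
  have hφ1 : φ 1 = 0 := by rw [hφeq (by norm_num)]; exact h1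
  -- Lipschitz
  obtain ⟨C, hCb⟩ := (isCompact_Icc (a := (-1:ℝ)) (b := 1)).exists_bound_of_continuousOn
    hdc.continuousOn
  have hlipψ : LipschitzOnWith (Real.toNNReal C) ψ (Set.Icc (-1 : ℝ) 1) := by
    refine (convex_Icc _ _).lipschitzOnWith_of_nnnorm_deriv_le (fun x _ => hdiff x)
      (fun x hx => ?_)
    rw [← NNReal.coe_le_coe, coe_nnnorm, Real.coe_toNNReal']
    exact le_max_of_le_left (hCb x hx)
  have hclamp : LipschitzWith 1 (fun y : ℝ => max (-1) (min 1 y)) :=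
    (LipschitzWith.id.const_min 1).const_max (-1)
  have hmaps : Set.MapsTo (fun y : ℝ => max (-1) (min 1 y)) Set.univ (Set.Icc (-1 : ℝ) 1) := by
    intro y _
    exact ⟨le_max_left _ _, max_le (by norm_num) (min_le_left _ _)⟩
  have hφlip : LipschitzWith (Real.toNNReal C * 1) φ := by
    rw [← lipschitzOnWith_univ]
    exact hlipψ.comp (hclamp.lipschitzOnWith) hmaps
  have hφcont : Continuous φ := hφlip.continuous
  -- not a.e. zero
  have hnotae : ¬ (∀ᵐ y ∂(volume.restrict (Set.Icc (-1:ℝ) 1)), φ y = 0) := by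
    intro hae
    have heq : Set.EqOn φ (fun _ => (0:ℝ)) (Set.Icc (-1:ℝ) 1) := by
      refine Measure.eqOn_of_ae_eq hae hφcont.continuousOn continuousOn_const ?_
      rw [interior_Icc, closure_Ioo (by norm_num : (-1:ℝ) ≠ 1)]
    have := heq (show (0:ℝ) ∈ Set.Icc (-1:ℝ) 1 by norm_num)
    rw [hφ0] at this
    exact hψ0 this
  -- equality of derivative integrals
  have hIeq : (∫ y in (-1:ℝ)..1, (deriv φ y) ^ 2) = I1 := by
    rw [hI1def]
    apply intervalIntegral.integral_congr_ae
    have h1m : ({(1:ℝ), (-1:ℝ)} : Set ℝ)ᶜ ∈ ae (volume : Measure ℝ) := by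
      rw [compl_mem_ae_iff]
      exact measure_union_null (measure_singleton _) (measure_singleton _)
    filter_upwards [h1m] with y hy hyI
    have hyI' : y ∈ Set.Ioc (-1:ℝ) 1 := by
      rwa [Set.uIoc_of_le (by norm_num : (-1:ℝ) ≤ 1)] at hyI
    simp only [Set.mem_compl_iff, Set.mem_insert_iff, Set.mem_singleton_iff, not_or] at hy
    have hyo : y ∈ Set.Ioo (-1:ℝ) 1 := ⟨hyI'.1, lt_of_le_of_ne hyI'.2 hy.1⟩
    have hfe : φ =ᶠ[nhds y] ψ :=
      Filter.eventuallyEq_of_mem (isOpen_Ioo.mem_nhds hyo)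
        (fun z hz => hφeq (Set.Ioo_subset_Icc_self hz))
    rw [hfe.deriv_eq]
  -- |B| < Bc
  have hbdd : BddAbove (BcSet g ρp ρm) := by
    by_contra hnb
    rw [Real.sSup_of_not_bddAbove hnb] at hBcsq
    nlinarith
  have hmem : g * (ρp - ρm) * (ψ 0) ^ 2 / I1 ∈ BcSet g ρp ρm := by
    refine ⟨φ, ⟨_, hφlip⟩, hφm1, hφ1, hnotae, ?_⟩
    rw [hIeq, hφ0]
  have hBlt : B ^ 2 < g * (ρp - ρm) * (ψ 0) ^ 2 / I1 := by
    rw [lt_div_iff₀ hI1pos]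
    linarith
  have hBBc : |B| < Bc := by
    have hle := le_csSup hbdd hmem
    rw [← hBcsq] at hle
    have hB2lt : B ^ 2 < Bc ^ 2 := lt_of_lt_of_le hBlt hle
    by_contra hcon
    push_neg at hcon
    have hsq : Bc ^ 2 ≤ |B| ^ 2 := pow_le_pow_left₀ hBc.le hcon 2
    rw [sq_abs] at hsq
    linarith
  refine ⟨hψ0, hBBc, ?_⟩
  -- third claim
  intro xivc hx0 hx2
  have hD : 0 < g * (ρp - ρm) * (ψ 0) ^ 2 - B ^ 2 * I1 := by linarith
  have hqmem : (B ^ 2 * I2) / (g * (ρp - ρm) * (ψ 0) ^ 2 - B ^ 2 * I1)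
      ∈ XivcSet g ρp ρm B :=
    ⟨ψ, hC2, hm1, h1, hdm1, hd1, hD, rfl⟩
  have hbddb : BddBelow (XivcSet g ρp ρm B) := by
    refine ⟨0, fun r hr => ?_⟩
    obtain ⟨χ, hχ2, _, _, _, _, hDχ, hrq⟩ := hr
    rw [hrq]
    refine div_nonneg (mul_nonneg (sq_nonneg _) ?_) hDχ.le
    exact intervalIntegral.integral_nonneg (by norm_num) (fun u _ => sq_nonneg _)
  have hle : sInf (XivcSet g ρp ρm B) ≤
      (B ^ 2 * I2) / (g * (ρp - ρm) * (ψ 0) ^ 2 - B ^ 2 * I1) := csInf_le hbddb hqmem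
  have hqlt : (B ^ 2 * I2) / (g * (ρp - ρm) * (ψ 0) ^ 2 - B ^ 2 * I1) < ξ ^ 2 := by
    rw [div_lt_iff₀ hD]
    have hid : (B ^ 2 / ξ ^ 2) * I2 * ξ ^ 2 = B ^ 2 * I2 := by
      field_simp
    have hstep := mul_lt_mul_of_pos_right
      (show (B ^ 2 / ξ ^ 2) * I2 < g * (ρp - ρm) * (ψ 0) ^ 2 - B ^ 2 * I1 by linarith) hξ2
    rw [hid] at hstep
    linarith [hstep]
  have hx2lt : xivc ^ 2 < ξ ^ 2 := by
    rw [hx2]; exact lt_of_le_of_lt hle hqlt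
  nlinarith [abs_nonneg ξ, sq_abs ξ]

end
end

section
/- Coercivity for the vertical field on the slab: suppose |B| > |B|_c. Then there exists a constant C > 0, depending only on B, g and [ρ], such that for every continuously differentiable vector field v = (v₁, v₂) : ℝ × [−1,1] → ℝ² with v(x₁, −1) = v(x₁, 1) = 0 for all x₁ ∈ ℝ and with v and its first-order partial derivatives square-integrable on Ω = ℝ × (−1,1), one has B²∫_Ω |∂₂v|² dx − g[ρ]∫_ℝ v₂(x₁, 0)² dx₁ ≥ C ( ∫_Ω |v|² dx + ∫_Ω |∂₂v|² dx ). -/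
open MeasureTheory Set Filter Topology

noncomputable section

/-- Partial derivative in the first (horizontal) variable. -/
def pd1 (f : ℝ × ℝ → ℝ) (x : ℝ × ℝ) : ℝ := deriv (fun t => f (t, x.2)) x.1

/-- Partial derivative in the second (vertical) variable. -/
def pd2 (f : ℝ × ℝ → ℝ) (x : ℝ × ℝ) : ℝ := deriv (fun t => f (x.1, t)) x.2

/-- The infinite slab `Ω = ℝ × (-1,1)`. -/
def Slab : Set (ℝ × ℝ) := {x : ℝ × ℝ | x.2 ∈ Ioo (-1:ℝ) 1}

open scoped NNReal

namespace VCAux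

lemma contIntOn {f : ℝ → ℝ} (hf : Continuous f) :
    IntegrableOn f (Ioo (-1:ℝ) 1) volume :=
  (hf.integrableOn_Icc (a := -1) (b := 1)).mono_set Ioo_subset_Icc_self

lemma not_ae_zero_gen {f : ℝ → ℝ} (hf : Continuous f) {s U : Set ℝ}
    (hs : MeasurableSet s) (hU : IsOpen U) (hUs : U ⊆ s) {y₀ : ℝ} (hy : y₀ ∈ U)
    (hne : f y₀ ≠ 0) : ¬ ∀ᵐ y ∂(volume.restrict s), f y = 0 := by
  intro h
  rw [ae_restrict_iff' hs] at h
  have h0 : volume {y | ¬ (y ∈ s → f y = 0)} = 0 := ae_iff.mp h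
  have hsub : U ∩ {y | f y ≠ 0} ⊆ {y | ¬ (y ∈ s → f y = 0)} := by
    rintro y ⟨h1, h2⟩
    simp only [Set.mem_setOf_eq]
    push_neg
    exact ⟨hUs h1, h2⟩
  have hop : IsOpen (U ∩ {y | f y ≠ 0}) := hU.inter (isOpen_ne_fun hf continuous_const)
  exact absurd (measure_mono_null hsub h0)
    (hop.measure_pos volume ⟨y₀, hy, hne⟩).ne'

lemma sq_intervalIntegral_le {f : ℝ → ℝ} (hf : Continuous f) {a b : ℝ} (hab : a ≤ b) :
    (∫ t in a..b, f t) ^ 2 ≤ (b - a) * ∫ t in a..b, (f t) ^ 2 := by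
  set S := ∫ t in a..b, f t with hS
  set Q := ∫ t in a..b, (f t) ^ 2 with hQ
  have hquad : ∀ l : ℝ, 0 ≤ (b - a) * l ^ 2 + 2 * l * S + Q := by
    intro l
    have h1 : (0:ℝ) ≤ ∫ t in a..b, (l + f t) ^ 2 :=
      intervalIntegral.integral_nonneg hab (fun t _ => sq_nonneg _)
    have h2 : ∫ t in a..b, (l + f t) ^ 2 = (b - a) * l ^ 2 + 2 * l * S + Q := by
      have e : (∫ t in a..b, (l + f t) ^ 2)
          = ∫ t in a..b, (l ^ 2 + (2 * l * f t + (f t) ^ 2)) :=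
        intervalIntegral.integral_congr (fun t _ => by ring)
      rw [e, intervalIntegral.integral_add (f := fun _ => l ^ 2) (g := fun t => 2 * l * f t + (f t) ^ 2) intervalIntegrable_const
          (((continuous_const.mul hf).add (hf.pow 2)).intervalIntegrable a b),
        intervalIntegral.integral_add (f := fun t => 2 * l * f t) (g := fun t => (f t) ^ 2) ((continuous_const.mul hf).intervalIntegrable a b)
          ((hf.pow 2).intervalIntegrable a b),
        intervalIntegral.integral_const, intervalIntegral.integral_const_mul]
      simp only [smul_eq_mul]
      ring
    linarith [h2 ▸ h1]
  rcases eq_or_lt_of_le hab with rfl | hlt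
  · simp [hS, hQ]
  · have hba : (0:ℝ) < b - a := by linarith
    have h := hquad (-(S / (b - a)))
    have key : (b - a) * ((b - a) * (-(S / (b - a))) ^ 2 + 2 * (-(S / (b - a))) * S + Q)
        = (b - a) * Q - S ^ 2 := by
      field_simp
      ring
    nlinarith [mul_nonneg hba.le h]


lemma ftc {φ : ℝ → ℝ} (hφ : ContDiff ℝ 1 φ) (a b : ℝ) :
    ∫ t in a..b, deriv φ t = φ b - φ a :=
  intervalIntegral.integral_deriv_eq_sub
    (fun x _ => (hφ.differentiable one_ne_zero).differentiableAt)
    ((hφ.continuous_deriv le_rfl).intervalIntegrable a b)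

lemma interval_eq_Ioo {f : ℝ → ℝ} :
    (∫ t in (-1:ℝ)..1, f t) = ∫ t in Ioo (-1:ℝ) 1, f t := by
  rw [intervalIntegral.integral_of_le (by norm_num : (-1:ℝ) ≤ 1),
    integral_Ioc_eq_integral_Ioo]

lemma pointwise_sq_le {φ : ℝ → ℝ} (hφ : ContDiff ℝ 1 φ) (h1 : φ (-1) = 0)
    {y : ℝ} (hy : y ∈ Icc (-1:ℝ) 1) :
    (φ y) ^ 2 ≤ 2 * ∫ t in Ioo (-1:ℝ) 1, (deriv φ t) ^ 2 := by
  have hcd := hφ.continuous_deriv le_rfl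
  have hIeq : (∫ t in (-1:ℝ)..1, (deriv φ t) ^ 2) = ∫ t in Ioo (-1:ℝ) 1, (deriv φ t) ^ 2 :=
    interval_eq_Ioo
  have hS : φ y = ∫ t in (-1:ℝ)..y, deriv φ t := by rw [ftc hφ, h1, sub_zero]
  have hCS := sq_intervalIntegral_le hcd hy.1
  have hQle : (∫ t in (-1:ℝ)..y, (deriv φ t) ^ 2) ≤ ∫ t in (-1:ℝ)..1, (deriv φ t) ^ 2 := by
    have hsplit := intervalIntegral.integral_add_adjacent_intervals (μ := volume) (f := fun t => (deriv φ t) ^ 2)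
      ((hcd.pow 2).intervalIntegrable (-1) y) ((hcd.pow 2).intervalIntegrable y 1)
    have h2 : 0 ≤ ∫ t in y..(1:ℝ), (deriv φ t) ^ 2 :=
      intervalIntegral.integral_nonneg hy.2 (fun t _ => sq_nonneg _)
    linarith
  have hQnn : 0 ≤ ∫ t in (-1:ℝ)..y, (deriv φ t) ^ 2 :=
    intervalIntegral.integral_nonneg hy.1 (fun t _ => sq_nonneg _)
  have hy2 : y - (-1) ≤ 2 := by linarith [hy.2]
  calc (φ y) ^ 2 = (∫ t in (-1:ℝ)..y, deriv φ t) ^ 2 := by rw [← hS]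
    _ ≤ (y - (-1)) * ∫ t in (-1:ℝ)..y, (deriv φ t) ^ 2 := hCS
    _ ≤ 2 * ∫ t in (-1:ℝ)..1, (deriv φ t) ^ 2 := by nlinarith
    _ = 2 * ∫ t in Ioo (-1:ℝ) 1, (deriv φ t) ^ 2 := by rw [hIeq]

lemma poincare {φ : ℝ → ℝ} (hφ : ContDiff ℝ 1 φ) (h1 : φ (-1) = 0) :
    ∫ y in Ioo (-1:ℝ) 1, (φ y) ^ 2 ≤ 4 * ∫ y in Ioo (-1:ℝ) 1, (deriv φ y) ^ 2 := by
  set I := ∫ t in Ioo (-1:ℝ) 1, (deriv φ t) ^ 2 with hI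
  have hb : ∀ y ∈ Ioo (-1:ℝ) 1, (φ y) ^ 2 ≤ 2 * I :=
    fun y hy => pointwise_sq_le hφ h1 (Ioo_subset_Icc_self hy)
  have hint1 : IntegrableOn (fun y => (φ y) ^ 2) (Ioo (-1:ℝ) 1) volume :=
    contIntOn (hφ.continuous.pow 2)
  have hint2 : IntegrableOn (fun _ : ℝ => 2 * I) (Ioo (-1:ℝ) 1) volume :=
    integrableOn_const measure_Ioo_lt_top.ne
  have hmono := setIntegral_mono_on hint1 hint2 measurableSet_Ioo hb
  rw [setIntegral_const] at hmono
  have hvol : (volume (Ioo (-1:ℝ) 1)).toReal = 2 := by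
    rw [Real.volume_Ioo]
    norm_num
  rw [measureReal_def, hvol] at hmono
  have : (2:ℝ) • (2 * I) = 4 * I := by
    rw [smul_eq_mul]; ring
  linarith [this ▸ hmono]

lemma trace_ineq {g ρp ρm Bc : ℝ} (hBc : 0 < Bc)
    (hub : ∀ r ∈ BcSet g ρp ρm, r ≤ Bc ^ 2)
    {φ : ℝ → ℝ} (hφ : ContDiff ℝ 1 φ) (h1 : φ (-1) = 0) (h2 : φ 1 = 0) :
    g * (ρp - ρm) * (φ 0) ^ 2 ≤ Bc ^ 2 * ∫ y in Ioo (-1:ℝ) 1, (deriv φ y) ^ 2 := by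
  set I := ∫ y in Ioo (-1:ℝ) 1, (deriv φ y) ^ 2 with hI
  have hcd := hφ.continuous_deriv le_rfl
  have hInn : 0 ≤ I := setIntegral_nonneg measurableSet_Ioo (fun y _ => sq_nonneg _)
  by_cases h0 : φ 0 = 0
  · rw [h0]
    have : (0:ℝ) ≤ Bc ^ 2 * I := mul_nonneg (sq_nonneg _) hInn
    simpa using this
  have hIpos : 0 < I := by
    rcases hInn.lt_or_eq with h | h
    · exact h
    · exfalso
      have hint : Integrable (fun y => (deriv φ y) ^ 2) (volume.restrict (Ioo (-1:ℝ) 1)) :=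
        contIntOn (hcd.pow 2)
      have hae : (fun y => (deriv φ y) ^ 2) =ᵐ[volume.restrict (Ioo (-1:ℝ) 1)] 0 :=
        (integral_eq_zero_iff_of_nonneg (fun y => sq_nonneg _) hint).mp h.symm
      have hz : ∀ᵐ y ∂(volume.restrict (Ioo (-1:ℝ) 1)), deriv φ y = 0 := by
        filter_upwards [hae] with y hy
        have : (deriv φ y) ^ 2 = 0 := hy
        exact pow_eq_zero_iff two_ne_zero |>.mp this
      have hd0 : ∀ y ∈ Ioo (-1:ℝ) 1, deriv φ y = 0 := by
        intro y hy
        by_contra hne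
        exact not_ae_zero_gen hcd measurableSet_Ioo isOpen_Ioo subset_rfl hy hne hz
      have hftc := ftc hφ (-1) 0
      have hzero : (∫ t in (-1:ℝ)..0, deriv φ t) = 0 := by
        rw [intervalIntegral.integral_of_le (by norm_num : (-1:ℝ) ≤ 0)]
        rw [setIntegral_congr_fun measurableSet_Ioc
          (fun y hy => hd0 y ⟨hy.1, lt_of_le_of_lt hy.2 one_pos⟩)]
        simp
      rw [hzero, h1, sub_zero] at hftc
      exact h0 hftc.symm
  -- build Lipschitz extension
  set c : ℝ → ℝ := fun y => max (-1) (min 1 y) with hc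
  set ψ : ℝ → ℝ := fun y => φ (c y) with hψ
  have hcl : LipschitzWith 1 c := (LipschitzWith.id.const_min 1).const_max (-1)
  have hmaps : ∀ y, c y ∈ Icc (-1:ℝ) 1 :=
    fun y => ⟨le_max_left _ _, max_le (by norm_num) (min_le_left _ _)⟩
  obtain ⟨M, hM⟩ := (isCompact_Icc (a := (-1:ℝ)) (b := 1)).exists_bound_of_continuousOn
    hcd.continuousOn
  set K : ℝ≥0 := ⟨max M 0, le_max_right _ _⟩ with hK
  have hLip : LipschitzOnWith K φ (Icc (-1:ℝ) 1) := by
    apply (convex_Icc (-1:ℝ) 1).lipschitzOnWith_of_nnnorm_deriv_le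
      (fun x _ => (hφ.differentiable one_ne_zero).differentiableAt)
    intro x hx
    rw [← NNReal.coe_le_coe]
    calc (‖deriv φ x‖₊ : ℝ) = ‖deriv φ x‖ := rfl
      _ ≤ M := hM x hx
      _ ≤ max M 0 := le_max_left _ _
  have hψLip : LipschitzWith (K * 1) ψ := by
    rw [← lipschitzOnWith_univ]
    exact hLip.comp (hcl.lipschitzOnWith) (fun y _ => hmaps y)
  have hc1 : c (-1) = -1 := by norm_num [hc]
  have hc2 : c 1 = 1 := by norm_num [hc]
  have hc0 : c 0 = 0 := by norm_num [hc]
  have hψ1 : ψ (-1) = 0 := by rw [hψ]; simp only [hc1, h1]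
  have hψ2 : ψ 1 = 0 := by rw [hψ]; simp only [hc2, h2]
  have hψ0 : ψ 0 = φ 0 := by rw [hψ]; simp only [hc0]
  have hψφ : ∀ y ∈ Ioo (-1:ℝ) 1, deriv ψ y = deriv φ y := by
    intro y hy
    apply Filter.EventuallyEq.deriv_eq
    filter_upwards [isOpen_Ioo.mem_nhds hy] with t ht
    have hct : c t = t := by
      rw [hc]
      simp only
      rw [min_eq_right ht.2.le, max_eq_right ht.1.le]
    rw [hψ]
    simp only [hct]
  have hIψ : (∫ y in (-1:ℝ)..1, (deriv ψ y) ^ 2) = I := by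
    rw [interval_eq_Ioo, hI]
    exact setIntegral_congr_fun measurableSet_Ioo (fun y hy => by rw [hψφ y hy])
  have hmem : g * (ρp - ρm) * (ψ 0) ^ 2 / I ∈ BcSet g ρp ρm := by
    refine ⟨ψ, ⟨K * 1, hψLip⟩, hψ1, hψ2, ?_, by rw [hIψ]⟩
    exact not_ae_zero_gen hψLip.continuous measurableSet_Icc isOpen_Ioo
      Ioo_subset_Icc_self (show (0:ℝ) ∈ Ioo (-1:ℝ) 1 by norm_num)
      (by rw [hψ0]; exact h0)
  have hle := hub _ hmem
  rw [div_le_iff₀ hIpos] at hle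
  rw [hψ0] at hle
  linarith

end VCAux

/-- coercivity for the vertical field: if `|B| > |B|_c` then there is `C > 0`
(depending only on `B`, `g`, `[ρ]`) such that for every `C¹` vector field `v` on the slab,
vanishing on the fixed boundaries and square integrable together with its first derivatives,
`B²∫_Ω |∂₂v|² - g[ρ]∫_ℝ v₂(x₁,0)² ≥ C(∫_Ω |v|² + ∫_Ω |∂₂v|²)`. -/
theorem vertical_coercivity
    (ρp ρm g B Bc : ℝ)
    (hρm : 0 < ρm) (hρ : ρm < ρp) (hg : 0 < g)
    (hB : B ≠ 0) (hBc : 0 < Bc) (hBcsq : Bc ^ 2 = sSup (BcSet g ρp ρm))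
    (hBgt : Bc < |B|) :
    ∃ C : ℝ, 0 < C ∧
      ∀ v : ℝ × ℝ → ℝ × ℝ, ContDiff ℝ 1 v →
        (∀ x₁ : ℝ, v (x₁, -1) = 0) → (∀ x₁ : ℝ, v (x₁, 1) = 0) →
        IntegrableOn (fun x => ((v x).1) ^ 2 + ((v x).2) ^ 2) Slab volume →
        IntegrableOn (fun x => (pd1 (fun z => (v z).1) x) ^ 2 + (pd1 (fun z => (v z).2) x) ^ 2)
          Slab volume →
        IntegrableOn (fun x => (pd2 (fun z => (v z).1) x) ^ 2 + (pd2 (fun z => (v z).2) x) ^ 2)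
          Slab volume →
        C * ((∫ x in Slab, (((v x).1) ^ 2 + ((v x).2) ^ 2)) +
              ∫ x in Slab, ((pd2 (fun z => (v z).1) x) ^ 2 + (pd2 (fun z => (v z).2) x) ^ 2)) ≤
          B ^ 2 * (∫ x in Slab,
              ((pd2 (fun z => (v z).1) x) ^ 2 + (pd2 (fun z => (v z).2) x) ^ 2)) -
            g * (ρp - ρm) * ∫ x₁ : ℝ, ((v (x₁, 0)).2) ^ 2 := by
  have hub : ∀ r ∈ BcSet g ρp ρm, r ≤ Bc ^ 2 := by
    intro r hr
    by_cases hbdd : BddAbove (BcSet g ρp ρm)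
    · rw [hBcsq]; exact le_csSup hbdd hr
    · exfalso
      rw [Real.sSup_of_not_bddAbove hbdd] at hBcsq
      nlinarith
  have hBB : Bc ^ 2 < B ^ 2 := by
    have h := sq_abs B
    nlinarith [hBgt, hBc]
  refine ⟨(B ^ 2 - Bc ^ 2) / 5, by linarith, ?_⟩
  intro v hv hbot htop hiv hipd1 hipd2
  clear hipd1
  set D : ℝ × ℝ → ℝ := fun x =>
    (pd2 (fun z => (v z).1) x) ^ 2 + (pd2 (fun z => (v z).2) x) ^ 2 with hDdef
  set F : ℝ × ℝ → ℝ := fun x => ((v x).1) ^ 2 + ((v x).2) ^ 2 with hFdef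
  set ν := (volume : Measure ℝ).restrict (Ioo (-1:ℝ) 1) with hν
  have hres : (volume : Measure (ℝ × ℝ)).restrict Slab = (volume : Measure ℝ).prod ν := by
    have hS : Slab = (univ : Set ℝ) ×ˢ Ioo (-1:ℝ) 1 := by
      ext ⟨a, b⟩; simp [Slab]
    rw [hS, Measure.volume_eq_prod, ← Measure.prod_restrict, Measure.restrict_univ]
  have hφc : ∀ x₁ : ℝ, ContDiff ℝ 1 (fun y => (v (x₁, y)).2) := fun x₁ =>
    contDiff_snd.comp (hv.comp (contDiff_const.prodMk contDiff_id))
  have hψc : ∀ x₁ : ℝ, ContDiff ℝ 1 (fun y => (v (x₁, y)).1) := fun x₁ =>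
    contDiff_fst.comp (hv.comp (contDiff_const.prodMk contDiff_id))
  have hφ1 : ∀ x₁ : ℝ, (v (x₁, -1)).2 = 0 := fun x₁ => by simp [hbot x₁]
  have hφ2 : ∀ x₁ : ℝ, (v (x₁, 1)).2 = 0 := fun x₁ => by simp [htop x₁]
  have hψ1 : ∀ x₁ : ℝ, (v (x₁, -1)).1 = 0 := fun x₁ => by simp [hbot x₁]
  have hDslice : ∀ x₁ : ℝ, (fun y => D (x₁, y)) = fun y =>
      (deriv (fun t => (v (x₁, t)).1) y) ^ 2 + (deriv (fun t => (v (x₁, t)).2) y) ^ 2 :=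
    fun x₁ => rfl
  have hFslice : ∀ x₁ : ℝ, (fun y => F (x₁, y)) = fun y =>
      ((v (x₁, y)).1) ^ 2 + ((v (x₁, y)).2) ^ 2 := fun x₁ => rfl
  have hDsliceInt : ∀ x₁ : ℝ, Integrable (fun y => D (x₁, y)) ν := by
    intro x₁
    rw [hDslice x₁, hν]
    exact VCAux.contIntOn ((((hψc x₁).continuous_deriv le_rfl).pow 2).add
      (((hφc x₁).continuous_deriv le_rfl).pow 2))
  have hFi : Integrable F ((volume : Measure ℝ).prod ν) := by rw [← hres]; exact hiv
  have hDi : Integrable D ((volume : Measure ℝ).prod ν) := by rw [← hres]; exact hipd2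
  have hWeq : (∫ x in Slab, D x) = ∫ x₁ : ℝ, ∫ y, D (x₁, y) ∂ν := by
    rw [show (∫ x in Slab, D x)
        = ∫ x, D x ∂((volume : Measure (ℝ × ℝ)).restrict Slab) from rfl, hres]
    exact integral_prod D hDi
  have hVeq : (∫ x in Slab, F x) = ∫ x₁ : ℝ, ∫ y, F (x₁, y) ∂ν := by
    rw [show (∫ x in Slab, F x)
        = ∫ x, F x ∂((volume : Measure (ℝ × ℝ)).restrict Slab) from rfl, hres]
    exact integral_prod F hFi
  have hg1i : Integrable (fun x₁ : ℝ => ∫ y, D (x₁, y) ∂ν) (volume : Measure ℝ) :=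
    hDi.integral_prod_left
  have hDnn : ∀ x : ℝ × ℝ, 0 ≤ D x := fun x => by rw [hDdef]; positivity
  have hFnn : ∀ x : ℝ × ℝ, 0 ≤ F x := fun x => by rw [hFdef]; positivity
  have hWnn : 0 ≤ ∫ x in Slab, D x := by
    rw [hWeq]
    exact integral_nonneg fun x₁ => integral_nonneg fun y => hDnn _
  -- pointwise-in-x₁ trace inequality
  have htr_pt : ∀ x₁ : ℝ, g * (ρp - ρm) * ((v (x₁, 0)).2) ^ 2 ≤ Bc ^ 2 * ∫ y, D (x₁, y) ∂ν := by
    intro x₁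
    have h1 : g * (ρp - ρm) * ((v (x₁, 0)).2) ^ 2
        ≤ Bc ^ 2 * ∫ y in Ioo (-1:ℝ) 1, (deriv (fun t => (v (x₁, t)).2) y) ^ 2 :=
      VCAux.trace_ineq hBc hub (hφc x₁) (hφ1 x₁) (hφ2 x₁)
    have h2 : (∫ y in Ioo (-1:ℝ) 1, (deriv (fun t => (v (x₁, t)).2) y) ^ 2)
        ≤ ∫ y, D (x₁, y) ∂ν := by
      rw [hDslice x₁, hν]
      apply setIntegral_mono_on
        (VCAux.contIntOn (((hφc x₁).continuous_deriv le_rfl).pow 2))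
        (VCAux.contIntOn ((((hψc x₁).continuous_deriv le_rfl).pow 2).add
          (((hφc x₁).continuous_deriv le_rfl).pow 2)))
        measurableSet_Ioo
      intro y _
      have := sq_nonneg (deriv (fun t => (v (x₁, t)).1) y)
      simp only [Pi.add_apply, Pi.pow_apply]
      linarith
    nlinarith [sq_nonneg Bc]
  -- pointwise-in-x₁ Poincaré inequality
  have hpoin_pt : ∀ x₁ : ℝ, (∫ y, F (x₁, y) ∂ν) ≤ 4 * ∫ y, D (x₁, y) ∂ν := by
    intro x₁
    have hp1 : (∫ y in Ioo (-1:ℝ) 1, ((v (x₁, y)).1) ^ 2)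
        ≤ 4 * ∫ y in Ioo (-1:ℝ) 1, (deriv (fun t => (v (x₁, t)).1) y) ^ 2 :=
      VCAux.poincare (hψc x₁) (hψ1 x₁)
    have hp2 : (∫ y in Ioo (-1:ℝ) 1, ((v (x₁, y)).2) ^ 2)
        ≤ 4 * ∫ y in Ioo (-1:ℝ) 1, (deriv (fun t => (v (x₁, t)).2) y) ^ 2 :=
      VCAux.poincare (hφc x₁) (hφ1 x₁)
    have hsplitF : (∫ y, F (x₁, y) ∂ν)
        = (∫ y in Ioo (-1:ℝ) 1, ((v (x₁, y)).1) ^ 2)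
          + ∫ y in Ioo (-1:ℝ) 1, ((v (x₁, y)).2) ^ 2 := by
      rw [hFslice x₁, hν]
      exact integral_add (VCAux.contIntOn ((hψc x₁).continuous.pow 2))
        (VCAux.contIntOn ((hφc x₁).continuous.pow 2))
    have hsplitD : (∫ y, D (x₁, y) ∂ν)
        = (∫ y in Ioo (-1:ℝ) 1, (deriv (fun t => (v (x₁, t)).1) y) ^ 2)
          + ∫ y in Ioo (-1:ℝ) 1, (deriv (fun t => (v (x₁, t)).2) y) ^ 2 := by
      rw [hDslice x₁, hν]
      exact integral_add
        (VCAux.contIntOn (((hψc x₁).continuous_deriv le_rfl).pow 2))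
        (VCAux.contIntOn (((hφc x₁).continuous_deriv le_rfl).pow 2))
    rw [hsplitF, hsplitD]
    linarith
  -- globalize
  have htrace : g * (ρp - ρm) * (∫ x₁ : ℝ, ((v (x₁, 0)).2) ^ 2)
      ≤ Bc ^ 2 * ∫ x in Slab, D x := by
    have hmono : (∫ x₁ : ℝ, g * (ρp - ρm) * ((v (x₁, 0)).2) ^ 2)
        ≤ ∫ x₁ : ℝ, Bc ^ 2 * ∫ y, D (x₁, y) ∂ν :=
      integral_mono_of_nonneg (Eventually.of_forall fun x₁ =>
          mul_nonneg (mul_nonneg hg.le (by linarith)) (sq_nonneg _))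
        (hg1i.const_mul _) (Eventually.of_forall htr_pt)
    rw [integral_const_mul, integral_const_mul] at hmono
    rw [hWeq]
    exact hmono
  have hV4W : (∫ x in Slab, F x) ≤ 4 * ∫ x in Slab, D x := by
    have hmono : (∫ x₁ : ℝ, ∫ y, F (x₁, y) ∂ν)
        ≤ ∫ x₁ : ℝ, 4 * ∫ y, D (x₁, y) ∂ν :=
      integral_mono_of_nonneg
        (Eventually.of_forall fun x₁ => integral_nonneg fun y => hFnn _)
        (hg1i.const_mul _) (Eventually.of_forall hpoin_pt)
    rw [integral_const_mul] at hmono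
    rw [hVeq, hWeq]
    exact hmono
  have hC : (0:ℝ) ≤ (B ^ 2 - Bc ^ 2) / 5 := by linarith
  have h5 : (∫ x in Slab, F x) + (∫ x in Slab, D x) ≤ 5 * ∫ x in Slab, D x := by linarith
  have hmul := mul_le_mul_of_nonneg_left h5 hC
  have hring : (B ^ 2 - Bc ^ 2) / 5 * (5 * ∫ x in Slab, D x)
      = B ^ 2 * (∫ x in Slab, D x) - Bc ^ 2 * ∫ x in Slab, D x := by ring
  linarith

end
end

section
/- Coercivity for the horizontal field on the slab: suppose |B| > |B|_c. Then there exists a constant C > 0, depending only on B, g and [ρ], such that for every continuously differentiable vector field v = (v₁, v₂) : ℝ × [−1,1] → ℝ² with v(x₁, −1) = v(x₁, 1) = 0 for all x₁ ∈ ℝ, satisfying the divergence-free condition ∂₁v₁ + ∂₂v₂ = 0 on Ω, and with v and its first-order partial derivatives square-integrable on Ω = ℝ × (−1,1), one has B²∫_Ω |∂₁v|² dx − g[ρ]∫_ℝ v₂(x₁, 0)² dx₁ ≥ C ( ∫_Ω (∂₁v₁)² dx + ∫_Ω ( v₂² + (∂₁v₂)² + (∂₂v₂)² ) dx ). -/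
open MeasureTheory Set Filter Topology

noncomputable section

/-! ### Auxiliary lemmas -/


lemma cont_ae_zero_on_open {f : ℝ → ℝ} (hf : Continuous f) {U : Set ℝ} (hU : IsOpen U)
    (h : ∀ᵐ y ∂(volume.restrict U), f y = 0) : ∀ y ∈ U, f y = 0 := by
  by_contra hc
  push_neg at hc
  obtain ⟨y, hyU, hy⟩ := hc
  have hVopen : IsOpen (U ∩ {x | f x ≠ 0}) := hU.inter (isOpen_ne_fun hf continuous_const)
  have hpos : 0 < volume (U ∩ {x | f x ≠ 0}) :=
    hVopen.measure_pos volume ⟨y, hyU, hy⟩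
  have h' := (ae_restrict_iff' hU.measurableSet).1 h
  rw [ae_iff] at h'
  have hsub : (U ∩ {x | f x ≠ 0}) ⊆ {a | ¬(a ∈ U → f a = 0)} := by
    intro z hz hzc
    exact hz.2 (hzc hz.1)
  exact absurd (measure_mono_null hsub h') hpos.ne'

lemma hasDerivAt_pd2 {f : ℝ × ℝ → ℝ} (hf : ContDiff ℝ 1 f) (a y : ℝ) :
    HasDerivAt (fun t => f (a, t)) (fderiv ℝ f (a, y) (0, 1)) y := by
  have hd : HasFDerivAt f (fderiv ℝ f (a, y)) (a, y) :=
    (hf.differentiable one_ne_zero (a, y)).hasFDerivAt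
  have hg : HasDerivAt (fun t : ℝ => ((a : ℝ), t)) (((0 : ℝ), (1 : ℝ))) y :=
    (hasDerivAt_const y a).prodMk (hasDerivAt_id y)
  exact hd.comp_hasDerivAt y hg

lemma hasDerivAt_pd1 {f : ℝ × ℝ → ℝ} (hf : ContDiff ℝ 1 f) (a y : ℝ) :
    HasDerivAt (fun t => f (t, y)) (fderiv ℝ f (a, y) (1, 0)) a := by
  have hd : HasFDerivAt f (fderiv ℝ f (a, y)) (a, y) :=
    (hf.differentiable one_ne_zero (a, y)).hasFDerivAt
  have hg : HasDerivAt (fun t : ℝ => (t, y)) (((1 : ℝ), (0 : ℝ))) a :=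
    (hasDerivAt_id a).prodMk (hasDerivAt_const a y)
  exact hd.comp_hasDerivAt a hg

lemma pd2_eq {f : ℝ × ℝ → ℝ} (hf : ContDiff ℝ 1 f) (x : ℝ × ℝ) :
    pd2 f x = fderiv ℝ f x (0, 1) := by
  have h := (hasDerivAt_pd2 hf x.1 x.2).deriv
  simpa [pd2] using h

lemma pd1_eq {f : ℝ × ℝ → ℝ} (hf : ContDiff ℝ 1 f) (x : ℝ × ℝ) :
    pd1 f x = fderiv ℝ f x (1, 0) := by
  have h := (hasDerivAt_pd1 hf x.1 x.2).deriv
  simpa [pd1] using h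

lemma continuous_pd2 {f : ℝ × ℝ → ℝ} (hf : ContDiff ℝ 1 f) : Continuous (pd2 f) := by
  have h : Continuous fun x : ℝ × ℝ => fderiv ℝ f x (0, 1) :=
    (hf.continuous_fderiv one_ne_zero).clm_apply continuous_const
  have he : pd2 f = fun x : ℝ × ℝ => fderiv ℝ f x (0, 1) := funext (pd2_eq hf)
  rw [he]; exact h

lemma continuous_pd1 {f : ℝ × ℝ → ℝ} (hf : ContDiff ℝ 1 f) : Continuous (pd1 f) := by
  have h : Continuous fun x : ℝ × ℝ => fderiv ℝ f x (1, 0) :=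
    (hf.continuous_fderiv one_ne_zero).clm_apply continuous_const
  have he : pd1 f = fun x : ℝ × ℝ => fderiv ℝ f x (1, 0) := funext (pd1_eq hf)
  rw [he]; exact h

lemma slice_contDiff {f : ℝ × ℝ → ℝ} (hf : ContDiff ℝ 1 f) (a : ℝ) :
    ContDiff ℝ 1 (fun y => f (a, y)) :=
  hf.comp (contDiff_const.prodMk contDiff_id)

/-- the clamp function to `[-1,1]` -/
def clmp (y : ℝ) : ℝ := max (-1) (min 1 y)

lemma clmp_lip : LipschitzWith 1 clmp := (LipschitzWith.id.const_min 1).const_max (-1)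

lemma clmp_mem (y : ℝ) : clmp y ∈ Icc (-1:ℝ) 1 :=
  ⟨le_max_left _ _, max_le (by norm_num) (min_le_left _ _)⟩

lemma clmp_of_mem {y : ℝ} (hy : y ∈ Icc (-1:ℝ) 1) : clmp y = y := by
  have h1 : min 1 y = y := min_eq_right hy.2
  rw [clmp, h1, max_eq_right hy.1]

/-- Key trace inequality coming from the definition of the critical magnetic number. -/
lemma trace_ineq_s18 {g ρp ρm Bc : ℝ} (hg : 0 < g) (hρ : ρm < ρp) (hBc : 0 < Bc)
    (hbdd : BddAbove (BcSet g ρp ρm)) (hsup : sSup (BcSet g ρp ρm) ≤ Bc ^ 2)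
    {φ : ℝ → ℝ} (hφ : ContDiff ℝ 1 φ) (h1 : φ (-1) = 0) (h2 : φ 1 = 0) :
    g * (ρp - ρm) * (φ 0) ^ 2 ≤ Bc ^ 2 * ∫ y in Ioo (-1:ℝ) 1, (deriv φ y) ^ 2 := by
  have hφc : Continuous φ := hφ.continuous
  have hdc : Continuous (deriv φ) := hφ.continuous_deriv le_rfl
  set D : ℝ := ∫ y in Ioo (-1:ℝ) 1, (deriv φ y) ^ 2 with hD
  have hD0 : 0 ≤ D :=
    setIntegral_nonneg measurableSet_Ioo (fun y _ => sq_nonneg _)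
  rcases eq_or_ne (φ 0) 0 with h0 | h0
  · rw [h0]
    simpa using mul_nonneg (sq_nonneg Bc) hD0
  have hDint : IntegrableOn (fun y => (deriv φ y) ^ 2) (Ioo (-1:ℝ) 1) volume :=
    ((hdc.pow 2).integrableOn_Icc).mono_set Ioo_subset_Icc_self
  have hDpos : 0 < D := by
    rcases hD0.lt_or_eq with h | h
    · exact h
    exfalso
    have hzero : ∀ᵐ y ∂(volume.restrict (Ioo (-1:ℝ) 1)), (deriv φ y) ^ 2 = 0 := by
      have := (integral_eq_zero_iff_of_nonneg_ae
        (ae_of_all _ (fun y => sq_nonneg (deriv φ y))) hDint).1 h.symm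
      filter_upwards [this] with y hy using hy
    have hz : ∀ y ∈ Ioo (-1:ℝ) 1, (deriv φ y) ^ 2 = 0 :=
      cont_ae_zero_on_open (hdc.pow 2) isOpen_Ioo hzero
    have hz' : ∀ y ∈ Ioo (-1:ℝ) 1, deriv φ y = 0 := fun y hy =>
      pow_eq_zero_iff two_ne_zero |>.mp (hz y hy)
    have hftc : ∫ y in (-1:ℝ)..0, deriv φ y = φ 0 - φ (-1) :=
      intervalIntegral.integral_deriv_eq_sub
        (fun x _ => hφ.differentiable one_ne_zero x) (hdc.intervalIntegrable _ _)
    have hIz : ∫ y in (-1:ℝ)..0, deriv φ y = 0 := by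
      rw [intervalIntegral.integral_of_le (by norm_num : (-1:ℝ) ≤ 0)]
      rw [setIntegral_congr_fun measurableSet_Ioc
        (fun y hy => hz' y ⟨hy.1, lt_of_le_of_lt hy.2 one_pos⟩)]
      simp
    rw [hIz, h1, sub_zero] at hftc
    exact h0 hftc.symm
  set ψ : ℝ → ℝ := fun y => φ (clmp y) with hψdef
  have hψc : Continuous ψ := hφc.comp (clmp_lip.continuous)
  obtain ⟨M, hM⟩ : ∃ M, ∀ x ∈ Icc (-1:ℝ) 1, ‖deriv φ x‖ ≤ M :=
    (isCompact_Icc).exists_bound_of_continuousOn hdc.continuousOn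
  have hlipOn : LipschitzOnWith ‖M‖₊ φ (Icc (-1:ℝ) 1) :=
    (convex_Icc _ _).lipschitzOnWith_of_nnnorm_deriv_le
      (fun x _ => hφ.differentiable one_ne_zero x)
      (fun x hx => by
        rw [← NNReal.coe_le_coe]
        exact (hM x hx).trans (le_abs_self M))
  have hψlip : LipschitzWith ‖M‖₊ ψ := by
    refine LipschitzWith.of_dist_le_mul fun x y => ?_
    calc dist (φ (clmp x)) (φ (clmp y)) ≤ ‖M‖₊ * dist (clmp x) (clmp y) :=
          hlipOn.dist_le_mul _ (clmp_mem x) _ (clmp_mem y)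
      _ ≤ ‖M‖₊ * dist x y := by
          have := clmp_lip.dist_le_mul x y
          rw [NNReal.coe_one, one_mul] at this
          exact mul_le_mul_of_nonneg_left this (by positivity)
  have hψm1 : ψ (-1) = 0 := by
    rw [hψdef]; simp only []
    rw [clmp_of_mem ⟨le_refl _, by norm_num⟩, h1]
  have hψ1 : ψ 1 = 0 := by
    rw [hψdef]; simp only []
    rw [clmp_of_mem ⟨by norm_num, le_refl _⟩, h2]
  have hψ0 : ψ 0 = φ 0 := by
    rw [hψdef]; simp only []
    rw [clmp_of_mem ⟨by norm_num, by norm_num⟩]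
  have hderiv_eq : ∀ y ∈ Ioo (-1:ℝ) 1, deriv ψ y = deriv φ y := by
    intro y hy
    have hev : ψ =ᶠ[𝓝 y] φ := by
      filter_upwards [isOpen_Ioo.mem_nhds hy] with z hz
      rw [hψdef]; simp only []
      rw [clmp_of_mem (Ioo_subset_Icc_self hz)]
    exact hev.deriv_eq
  have hDψ : (∫ y in (-1:ℝ)..1, (deriv ψ y) ^ 2) = D := by
    rw [intervalIntegral.integral_of_le (by norm_num : (-1:ℝ) ≤ 1),
      integral_Ioc_eq_integral_Ioo]
    exact setIntegral_congr_fun measurableSet_Ioo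
      (fun y hy => by rw [hderiv_eq y hy])
  have hnotae : ¬ (∀ᵐ y ∂(volume.restrict (Icc (-1:ℝ) 1)), ψ y = 0) := by
    intro hae
    have hae' : ∀ᵐ y ∂(volume.restrict (Ioo (-1:ℝ) 1)), ψ y = 0 :=
      ae_restrict_of_ae_restrict_of_subset Ioo_subset_Icc_self hae
    have := cont_ae_zero_on_open hψc isOpen_Ioo hae' 0 (by constructor <;> norm_num)
    rw [hψ0] at this
    exact h0 this
  have hmem : g * (ρp - ρm) * (ψ 0) ^ 2 / ∫ y in (-1:ℝ)..1, (deriv ψ y) ^ 2 ∈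
      BcSet g ρp ρm :=
    ⟨ψ, ⟨‖M‖₊, hψlip⟩, hψm1, hψ1, hnotae, rfl⟩
  have hle := (le_csSup hbdd hmem).trans hsup
  rw [hDψ, hψ0] at hle
  calc g * (ρp - ρm) * (φ 0) ^ 2 = (g * (ρp - ρm) * (φ 0) ^ 2 / D) * D := by
        field_simp
    _ ≤ Bc ^ 2 * D := mul_le_mul_of_nonneg_right hle hD0

/-- One-dimensional Poincaré inequality on `(-1,1)` with vanishing left endpoint. -/
lemma poincare {φ : ℝ → ℝ} (hφ : ContDiff ℝ 1 φ) (h1 : φ (-1) = 0) :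
    ∫ y in Ioo (-1:ℝ) 1, (φ y) ^ 2 ≤ 16 * ∫ y in Ioo (-1:ℝ) 1, (deriv φ y) ^ 2 := by
  have hφc : Continuous φ := hφ.continuous
  have hdc : Continuous (deriv φ) := hφ.continuous_deriv le_rfl
  set d : ℝ → ℝ := fun t => 2 * φ t * deriv φ t with hd
  have hdcont : Continuous d := (continuous_const.mul hφc).mul hdc
  have hder : ∀ t : ℝ, HasDerivAt (fun y => (φ y) ^ 2) (d t) t := by
    intro t
    have h := ((hφ.differentiable one_ne_zero t).hasDerivAt).fun_pow 2
    refine h.congr_deriv ?_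
    push_cast
    simp only [hd, pow_one]
    try ring
  set M : ℝ := ∫ t in Ioc (-1:ℝ) 1, |d t| with hM
  have hintd : IntegrableOn (fun t => |d t|) (Ioc (-1:ℝ) 1) volume :=
    (hdcont.abs.integrableOn_Icc).mono_set Ioc_subset_Icc_self
  have hpt : ∀ y ∈ Ioo (-1:ℝ) 1, (φ y) ^ 2 ≤ M := by
    intro y hy
    have hftc : ∫ t in (-1:ℝ)..y, d t = (φ y) ^ 2 - (φ (-1)) ^ 2 :=
      intervalIntegral.integral_eq_sub_of_hasDerivAt
        (fun t _ => hder t) (hdcont.intervalIntegrable _ _)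
    have hle1 : (φ y) ^ 2 = ∫ t in Ioc (-1:ℝ) y, d t := by
      rw [← intervalIntegral.integral_of_le hy.1.le, hftc, h1]
      ring
    rw [hle1]
    have hint1 : IntegrableOn d (Ioc (-1:ℝ) y) volume :=
      (hdcont.integrableOn_Icc).mono_set
        (Ioc_subset_Icc_self.trans (Icc_subset_Icc le_rfl hy.2.le))
    calc ∫ t in Ioc (-1:ℝ) y, d t ≤ ∫ t in Ioc (-1:ℝ) y, |d t| :=
          setIntegral_mono_on hint1 (hintd.mono_set (Ioc_subset_Ioc_right hy.2.le))
            measurableSet_Ioc (fun t _ => le_abs_self _)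
      _ ≤ M := by
          rw [hM]
          exact setIntegral_mono_set hintd (ae_of_all _ fun t => abs_nonneg _)
            ((Ioc_subset_Ioc_right hy.2.le).eventuallyLE)
  have hsplit : M ≤ (1/4) * (∫ t in Ioc (-1:ℝ) 1, (φ t) ^ 2)
      + 4 * ∫ t in Ioc (-1:ℝ) 1, (deriv φ t) ^ 2 := by
    have hQint : IntegrableOn (fun t => (φ t) ^ 2) (Ioc (-1:ℝ) 1) volume :=
      ((hφc.pow 2).integrableOn_Icc).mono_set Ioc_subset_Icc_self
    have hAint : IntegrableOn (fun t => (deriv φ t) ^ 2) (Ioc (-1:ℝ) 1) volume :=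
      ((hdc.pow 2).integrableOn_Icc).mono_set Ioc_subset_Icc_self
    have hmono : M ≤ ∫ t in Ioc (-1:ℝ) 1,
        ((1/4) * (φ t) ^ 2 + 4 * (deriv φ t) ^ 2) := by
      refine setIntegral_mono_on hintd ((hQint.const_mul _).add (hAint.const_mul _))
        measurableSet_Ioc (fun t _ => ?_)
      have hb : |2 * φ t * deriv φ t| ≤ (1/4) * (φ t) ^ 2 + 4 * (deriv φ t) ^ 2 :=
        abs_le.mpr ⟨by nlinarith [sq_nonneg (φ t / 2 + 2 * deriv φ t)],
          by nlinarith [sq_nonneg (φ t / 2 - 2 * deriv φ t)]⟩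
      simpa only [hd] using hb
    rw [integral_add (hQint.const_mul _) (hAint.const_mul _),
      MeasureTheory.integral_const_mul, MeasureTheory.integral_const_mul] at hmono
    exact hmono
  have hQIoo : IntegrableOn (fun t => (φ t) ^ 2) (Ioo (-1:ℝ) 1) volume :=
    ((hφc.pow 2).integrableOn_Icc).mono_set Ioo_subset_Icc_self
  have hQle : ∫ y in Ioo (-1:ℝ) 1, (φ y) ^ 2 ≤ 2 * M := by
    have : ∫ y in Ioo (-1:ℝ) 1, (φ y) ^ 2 ≤ ∫ _y in Ioo (-1:ℝ) 1, M := by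
      refine setIntegral_mono_on hQIoo (integrableOn_const ?_)
        measurableSet_Ioo hpt
      rw [Real.volume_Ioo]; exact ENNReal.ofReal_ne_top
    rw [setIntegral_const, measureReal_def, Real.volume_Ioo, smul_eq_mul] at this
    calc ∫ y in Ioo (-1:ℝ) 1, (φ y) ^ 2 ≤ (ENNReal.ofReal (1 - (-1))).toReal * M := this
      _ = 2 * M := by norm_num [ENNReal.toReal_ofReal]
  have hQeq : ∫ t in Ioc (-1:ℝ) 1, (φ t) ^ 2 = ∫ y in Ioo (-1:ℝ) 1, (φ y) ^ 2 :=
    integral_Ioc_eq_integral_Ioo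
  have hAeq : ∫ t in Ioc (-1:ℝ) 1, (deriv φ t) ^ 2
      = ∫ y in Ioo (-1:ℝ) 1, (deriv φ y) ^ 2 := integral_Ioc_eq_integral_Ioo
  rw [hQeq, hAeq] at hsplit
  linarith

/-! ### Slab / Fubini infrastructure -/

lemma Slab_eq : Slab = (univ : Set ℝ) ×ˢ Ioo (-1:ℝ) 1 := by
  ext x; simp [Slab, Set.mem_prod]

lemma measurableSet_Slab : MeasurableSet Slab := by
  rw [Slab_eq]; exact MeasurableSet.univ.prod measurableSet_Ioo

lemma restrict_slab : (volume : Measure (ℝ × ℝ)).restrict Slab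
    = (volume : Measure ℝ).prod ((volume : Measure ℝ).restrict (Ioo (-1:ℝ) 1)) := by
  rw [Slab_eq, Measure.volume_eq_prod, ← Measure.prod_restrict, Measure.restrict_univ]

lemma integrable_prod_of_slab {F : ℝ × ℝ → ℝ} (hF : IntegrableOn F Slab volume) :
    Integrable F ((volume : Measure ℝ).prod ((volume : Measure ℝ).restrict (Ioo (-1:ℝ) 1))) := by
  rw [← restrict_slab]; exact hF

lemma fubini_slab {F : ℝ × ℝ → ℝ} (hF : IntegrableOn F Slab volume) :
    ∫ x in Slab, F x = ∫ x₁ : ℝ, ∫ y in Ioo (-1:ℝ) 1, F (x₁, y) := by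
  rw [show (∫ x in Slab, F x) = ∫ x, F x ∂((volume : Measure (ℝ × ℝ)).restrict Slab) from rfl,
    restrict_slab]
  exact MeasureTheory.integral_prod F (integrable_prod_of_slab hF)

lemma integrable_slices {F : ℝ × ℝ → ℝ} (hF : IntegrableOn F Slab volume) :
    Integrable (fun x₁ => ∫ y in Ioo (-1:ℝ) 1, F (x₁, y)) volume :=
  (integrable_prod_of_slab hF).integral_prod_left

lemma int_of_le {f h : ℝ × ℝ → ℝ} (hf : Continuous f) (h0 : ∀ x, 0 ≤ f x)
    (hle : ∀ x, f x ≤ h x) (hh : IntegrableOn h Slab volume) :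
    IntegrableOn f Slab volume :=
  hh.mono' (hf.aestronglyMeasurable.restrict)
    (ae_of_all _ fun x => by
      rw [Real.norm_eq_abs, abs_of_nonneg (h0 x)]; exact hle x)


/-- coercivity for the horizontal field: if `|B| > |B|_c` then there is `C > 0`
(depending only on `B`, `g`, `[ρ]`) such that for every `C¹` divergence-free vector field `v`
on the slab, vanishing on the fixed boundaries and square integrable together with its first
derivatives, `B²∫_Ω |∂₁v|² - g[ρ]∫_ℝ v₂(x₁,0)² ≥ C(∫_Ω (∂₁v₁)² + ∫_Ω (v₂² + (∂₁v₂)² + (∂₂v₂)²))`. -/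
theorem horizontal_coercivity
    (ρp ρm g B Bc : ℝ)
    (hρm : 0 < ρm) (hρ : ρm < ρp) (hg : 0 < g)
    (hB : B ≠ 0) (hBc : 0 < Bc) (hBcsq : Bc ^ 2 = sSup (BcSet g ρp ρm))
    (hBgt : Bc < |B|) :
    ∃ C : ℝ, 0 < C ∧
      ∀ v : ℝ × ℝ → ℝ × ℝ, ContDiff ℝ 1 v →
        (∀ x₁ : ℝ, v (x₁, -1) = 0) → (∀ x₁ : ℝ, v (x₁, 1) = 0) →
        (∀ x ∈ Slab, pd1 (fun z => (v z).1) x + pd2 (fun z => (v z).2) x = 0) →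
        IntegrableOn (fun x => ((v x).1) ^ 2 + ((v x).2) ^ 2) Slab volume →
        IntegrableOn (fun x => (pd1 (fun z => (v z).1) x) ^ 2 + (pd1 (fun z => (v z).2) x) ^ 2)
          Slab volume →
        IntegrableOn (fun x => (pd2 (fun z => (v z).1) x) ^ 2 + (pd2 (fun z => (v z).2) x) ^ 2)
          Slab volume →
        C * ((∫ x in Slab, (pd1 (fun z => (v z).1) x) ^ 2) +
              ∫ x in Slab, (((v x).2) ^ 2 + (pd1 (fun z => (v z).2) x) ^ 2 +
                (pd2 (fun z => (v z).2) x) ^ 2)) ≤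
          B ^ 2 * (∫ x in Slab,
              ((pd1 (fun z => (v z).1) x) ^ 2 + (pd1 (fun z => (v z).2) x) ^ 2)) -
            g * (ρp - ρm) * ∫ x₁ : ℝ, ((v (x₁, 0)).2) ^ 2 := by
  -- basic facts about Bc
  have hBc2pos : 0 < Bc ^ 2 := by positivity
  have hbdd : BddAbove (BcSet g ρp ρm) := by
    by_contra hnb
    rw [Real.sSup_of_not_bddAbove hnb] at hBcsq
    exact absurd hBcsq hBc2pos.ne'
  have hsup : sSup (BcSet g ρp ρm) ≤ Bc ^ 2 := le_of_eq hBcsq.symm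
  have hBB : Bc ^ 2 < B ^ 2 := by
    calc Bc ^ 2 < |B| ^ 2 := by
          apply pow_lt_pow_left₀ hBgt hBc.le
          norm_num
      _ = B ^ 2 := sq_abs B
  -- the constant
  refine ⟨min ((B ^ 2 - Bc ^ 2) / 18) (B ^ 2), lt_min (by linarith) (by positivity), ?_⟩
  set C : ℝ := min ((B ^ 2 - Bc ^ 2) / 18) (B ^ 2) with hCdef
  have hCpos : 0 < C := lt_min (by linarith) (by positivity)
  have hC18 : C * 18 ≤ B ^ 2 - Bc ^ 2 := by
    have := min_le_left ((B ^ 2 - Bc ^ 2) / 18) (B ^ 2)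
    rw [← hCdef] at this
    linarith
  have hCB : C ≤ B ^ 2 := by
    have := min_le_right ((B ^ 2 - Bc ^ 2) / 18) (B ^ 2)
    rw [← hCdef] at this
    linarith
  intro v hv hlow hhigh hdiv hint0 hint1 hint2
  set f1 : ℝ × ℝ → ℝ := fun z => (v z).1 with hf1def
  set f2 : ℝ × ℝ → ℝ := fun z => (v z).2 with hf2def
  have hf1 : ContDiff ℝ 1 f1 := (contDiff_fst).comp hv
  have hf2 : ContDiff ℝ 1 f2 := (contDiff_snd).comp hv
  -- boundary values of f2
  have hf2low : ∀ x₁ : ℝ, f2 (x₁, -1) = 0 := fun x₁ => by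
    rw [hf2def]; simp only []; rw [hlow x₁]; rfl
  have hf2high : ∀ x₁ : ℝ, f2 (x₁, 1) = 0 := fun x₁ => by
    rw [hf2def]; simp only []; rw [hhigh x₁]; rfl
  -- integrability of all pieces
  have hQi : IntegrableOn (fun x => (f2 x) ^ 2) Slab volume :=
    int_of_le ((hf2.continuous).pow 2) (fun x => sq_nonneg _)
      (fun x => by nlinarith [sq_nonneg (f1 x)]) hint0
  have hAi : IntegrableOn (fun x => (pd1 f1 x) ^ 2) Slab volume :=
    int_of_le ((continuous_pd1 hf1).pow 2) (fun x => sq_nonneg _)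
      (fun x => by nlinarith [sq_nonneg (pd1 f2 x)]) hint1
  have hPi : IntegrableOn (fun x => (pd1 f2 x) ^ 2) Slab volume :=
    int_of_le ((continuous_pd1 hf2).pow 2) (fun x => sq_nonneg _)
      (fun x => by nlinarith [sq_nonneg (pd1 f1 x)]) hint1
  have hA'i : IntegrableOn (fun x => (pd2 f2 x) ^ 2) Slab volume :=
    int_of_le ((continuous_pd2 hf2).pow 2) (fun x => sq_nonneg _)
      (fun x => by nlinarith [sq_nonneg (pd2 f1 x)]) hint2
  -- name the integrals
  set A : ℝ := ∫ x in Slab, (pd1 f1 x) ^ 2 with hAdef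
  set P : ℝ := ∫ x in Slab, (pd1 f2 x) ^ 2 with hPdef
  set A' : ℝ := ∫ x in Slab, (pd2 f2 x) ^ 2 with hA'def
  set Q : ℝ := ∫ x in Slab, (f2 x) ^ 2 with hQdef
  set T : ℝ := ∫ x₁ : ℝ, (f2 (x₁, 0)) ^ 2 with hTdef
  have hA'0 : 0 ≤ A' := setIntegral_nonneg measurableSet_Slab (fun x _ => sq_nonneg _)
  have hP0 : 0 ≤ P := setIntegral_nonneg measurableSet_Slab (fun x _ => sq_nonneg _)
  -- divergence-free: A = A'
  have hAA' : A = A' := by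
    rw [hAdef, hA'def]
    refine setIntegral_congr_fun measurableSet_Slab (fun x hx => ?_)
    have h := hdiv x hx
    have h' : pd1 f1 x = - pd2 f2 x := by
      rw [hf1def, hf2def]; linarith [h]
    simp only [h', neg_sq]
  -- slice properties
  have hslice : ∀ x₁ : ℝ, ContDiff ℝ 1 (fun y => f2 (x₁, y)) := fun x₁ =>
    slice_contDiff hf2 x₁
  have hsderiv : ∀ x₁ y : ℝ, deriv (fun t => f2 (x₁, t)) y = pd2 f2 (x₁, y) :=
    fun _ _ => rfl
  -- Fubini for A' and Q
  have hA'fub : A' = ∫ x₁ : ℝ, ∫ y in Ioo (-1:ℝ) 1, (pd2 f2 (x₁, y)) ^ 2 := by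
    rw [hA'def]; exact fubini_slab hA'i
  have hQfub : Q = ∫ x₁ : ℝ, ∫ y in Ioo (-1:ℝ) 1, (f2 (x₁, y)) ^ 2 := by
    rw [hQdef]; exact fubini_slab hQi
  -- trace estimate: g (ρp - ρm) T ≤ Bc² A'
  have htrace : g * (ρp - ρm) * T ≤ Bc ^ 2 * A' := by
    have hpt : ∀ x₁ : ℝ, g * (ρp - ρm) * (f2 (x₁, 0)) ^ 2
        ≤ Bc ^ 2 * ∫ y in Ioo (-1:ℝ) 1, (pd2 f2 (x₁, y)) ^ 2 := by
      intro x₁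
      have := trace_ineq_s18 hg hρ hBc hbdd hsup (hslice x₁)
        (hf2low x₁) (hf2high x₁)
      simpa only [hsderiv] using this
    have hRint : Integrable
        (fun x₁ => Bc ^ 2 * ∫ y in Ioo (-1:ℝ) 1, (pd2 f2 (x₁, y)) ^ 2) volume :=
      (integrable_slices hA'i).const_mul _
    calc g * (ρp - ρm) * T
        = ∫ x₁ : ℝ, g * (ρp - ρm) * (f2 (x₁, 0)) ^ 2 := by
          rw [hTdef, MeasureTheory.integral_const_mul]
      _ ≤ ∫ x₁ : ℝ, Bc ^ 2 * ∫ y in Ioo (-1:ℝ) 1, (pd2 f2 (x₁, y)) ^ 2 :=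
          integral_mono_of_nonneg
            (ae_of_all _ fun x₁ =>
              mul_nonneg (by nlinarith) (sq_nonneg _))
            hRint (ae_of_all _ hpt)
      _ = Bc ^ 2 * A' := by
          rw [MeasureTheory.integral_const_mul, ← hA'fub]
  -- Poincaré estimate: Q ≤ 16 A'
  have hpoin : Q ≤ 16 * A' := by
    rw [hQfub, hA'fub, ← MeasureTheory.integral_const_mul]
    refine integral_mono (integrable_slices hQi)
      ((integrable_slices hA'i).const_mul 16) (fun x₁ => ?_)
    have := poincare (hslice x₁) (hf2low x₁)
    simpa only [hsderiv] using this
  -- split the big integrals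
  have hQPi : IntegrableOn (fun x => (f2 x) ^ 2 + (pd1 f2 x) ^ 2) Slab volume := hQi.add hPi
  have hsplit2 : (∫ x in Slab, ((f2 x) ^ 2 + (pd1 f2 x) ^ 2 + (pd2 f2 x) ^ 2))
      = Q + P + A' :=
    calc (∫ x in Slab, ((f2 x) ^ 2 + (pd1 f2 x) ^ 2 + (pd2 f2 x) ^ 2))
        = (∫ x in Slab, ((f2 x) ^ 2 + (pd1 f2 x) ^ 2)) + ∫ x in Slab, (pd2 f2 x) ^ 2 :=
          integral_add hQPi hA'i
      _ = Q + P + A' := by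
          rw [hQdef, hPdef]
          exact congrArg (fun r => r + A') (integral_add hQi hPi)
  have hsplit1 : (∫ x in Slab, ((pd1 f1 x) ^ 2 + (pd1 f2 x) ^ 2)) = A + P := by
    rw [hAdef, hPdef]
    exact integral_add hAi hPi
  rw [hsplit2, hsplit1]
  -- final arithmetic
  have h1 : C * Q ≤ C * (16 * A') := mul_le_mul_of_nonneg_left hpoin hCpos.le
  have h2 : (C * 18) * A' ≤ (B ^ 2 - Bc ^ 2) * A' :=
    mul_le_mul_of_nonneg_right hC18 hA'0
  have h3 : C * P ≤ B ^ 2 * P := mul_le_mul_of_nonneg_right hCB hP0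
  nlinarith [htrace, hAA', h1, h2, h3, hA'0, hP0]


end
end
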